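/- arXiv:1407.2488 — 10 statements merged into one kernel-verified Lean document; each statement's English description precedes it below -/
import Mathlib

section
/- For all integers n ≥ 2, 2 ≤ k ≤ n, and reals ρ ≥ 0, θ₂ ≥ 0, the expected value of Tajima's estimator for a dispensable gene present in k of n individuals, namely θ₂·(2/(k(k−1)))·(k/n)·Σ_{s=1}^{k−1} (k−s)·C(n−1,s)^{-1}·B(n,s,ρ), is at most (k/n)·θ₂. Equivalently, the bias θ₂ − E[π̂_k] is at least ((n−k)/n)·θ₂. -/
open Finset

/-- `B n s ρ = Σ_{j=0}^{n-s-1} ((j+1)/(j+1+ρ))·C(n−j−2, s−1)`. -/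
noncomputable def B (n s : ℕ) (ρ : ℝ) : ℝ :=
  ∑ j ∈ Finset.range (n - s), ((j : ℝ) + 1) / ((j : ℝ) + 1 + ρ) * ((n - j - 2).choose (s - 1) : ℝ)

lemma hockey (n s : ℕ) (hs : 1 ≤ s) (hsn : s + 1 ≤ n) :
    ∑ j ∈ Finset.range (n - s), (n - j - 2).choose (s - 1) = (n - 1).choose s := by
  have h1 : ∑ j ∈ Finset.range (n - s), (n - j - 2).choose (s - 1)
      = ∑ j ∈ Finset.range (n - s), (fun i => (s - 1 + i).choose (s - 1)) ((n - s) - 1 - j) := by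
    apply Finset.sum_congr rfl
    intro j hj
    simp only [Finset.mem_range] at hj
    congr 1
    omega
  rw [h1, Finset.sum_range_reflect (fun i => (s - 1 + i).choose (s - 1)) (n - s)]
  have h2 : ∑ j ∈ Finset.range (n - s), (s - 1 + j).choose (s - 1)
      = ∑ i ∈ Finset.Icc (s - 1) (n - 2), i.choose (s - 1) := by
    rw [← Finset.Ico_add_one_right_eq_Icc, Finset.sum_Ico_eq_sum_range]
    apply Finset.sum_congr
    · congr 1; omega
    · intro j _; rfl
  rw [h2, Nat.sum_Icc_choose]
  congr 1 <;> omega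

lemma B_nonneg (n s : ℕ) (ρ : ℝ) (hρ : 0 ≤ ρ) : 0 ≤ B n s ρ := by
  apply Finset.sum_nonneg
  intro j _
  have : (0:ℝ) < (j : ℝ) + 1 + ρ := by positivity
  positivity

lemma B_le (n s : ℕ) (ρ : ℝ) (hρ : 0 ≤ ρ) (hs : 1 ≤ s) (hsn : s + 1 ≤ n) :
    B n s ρ ≤ ((n - 1).choose s : ℝ) := by
  have := hockey n s hs hsn
  calc B n s ρ ≤ ∑ j ∈ Finset.range (n - s), ((n - j - 2).choose (s - 1) : ℝ) := by
        apply Finset.sum_le_sum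
        intro j _
        have h1 : (0:ℝ) < (j : ℝ) + 1 + ρ := by positivity
        have h2 : ((j : ℝ) + 1) / ((j : ℝ) + 1 + ρ) ≤ 1 := by
          rw [div_le_one h1]; linarith
        have h3 : (0:ℝ) ≤ ((n - j - 2).choose (s - 1) : ℝ) := by positivity
        nlinarith [div_nonneg (by positivity : (0:ℝ) ≤ (j:ℝ)+1) h1.le]
    _ = ((n - 1).choose s : ℝ) := by
        rw [← Nat.cast_sum, this]

lemma gauss (m : ℕ) : ∑ s ∈ Finset.Icc 1 m, (((m : ℝ) + 1) - s) = ((m : ℝ) + 1) * m / 2 := by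
  induction m with
  | zero => simp
  | succ m ih =>
    rw [Finset.sum_Icc_succ_top (by omega)]
    have : ∑ s ∈ Finset.Icc 1 m, (((m : ℝ) + 1 + 1) - s)
        = ∑ s ∈ Finset.Icc 1 m, ((((m : ℝ) + 1) - s) + 1) := by
      apply Finset.sum_congr rfl; intro s _; push_cast; ring
    push_cast
    rw [this, Finset.sum_add_distrib, ih]
    simp [Nat.card_Icc]
    ring

lemma gauss' (k : ℕ) (hk : 1 ≤ k) :
    ∑ s ∈ Finset.Icc 1 (k - 1), ((k:ℝ) - s) = (k:ℝ) * ((k:ℝ) - 1) / 2 := by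
  have h := gauss (k - 1)
  have hc : ((k-1:ℕ):ℝ) = (k:ℝ) - 1 := by rw [Nat.cast_sub hk, Nat.cast_one]
  rw [hc] at h
  have h2 : ∑ s ∈ Finset.Icc 1 (k-1), ((k:ℝ) - s)
      = ∑ s ∈ Finset.Icc 1 (k-1), (((k:ℝ) - 1 + 1) - s) := by
    apply Finset.sum_congr rfl; intro s _; ring
  rw [h2, h]; ring

/-- the expected Tajima estimator for a dispensable gene in `k` of `n`
individuals is at most `(k/n)·θ₂`; equivalently the bias is at least `((n−k)/n)·θ₂`. -/
theorem stmt2 (n k : ℕ) (hn : 2 ≤ n) (hk : 2 ≤ k) (hkn : k ≤ n) (ρ θ₂ : ℝ)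
    (hρ : 0 ≤ ρ) (hθ : 0 ≤ θ₂) :
    θ₂ * (2 / ((k : ℝ) * ((k : ℝ) - 1))) * ((k : ℝ) / (n : ℝ)) *
        (∑ s ∈ Finset.Icc 1 (k - 1),
          ((k : ℝ) - (s : ℝ)) * (((n - 1).choose s : ℝ))⁻¹ * B n s ρ) ≤
      (k : ℝ) / (n : ℝ) * θ₂ ∧
    ((n : ℝ) - (k : ℝ)) / (n : ℝ) * θ₂ ≤
      θ₂ - θ₂ * (2 / ((k : ℝ) * ((k : ℝ) - 1))) * ((k : ℝ) / (n : ℝ)) *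
        (∑ s ∈ Finset.Icc 1 (k - 1),
          ((k : ℝ) - (s : ℝ)) * (((n - 1).choose s : ℝ))⁻¹ * B n s ρ) := by
  have hk1 : (1:ℝ) ≤ (k:ℝ) - 1 := by
    have : (2:ℝ) ≤ (k:ℝ) := by exact_mod_cast hk
    linarith
  have hn0 : (0:ℝ) < (n:ℝ) := by positivity
  have hS : (∑ s ∈ Finset.Icc 1 (k - 1),
      ((k : ℝ) - (s : ℝ)) * (((n - 1).choose s : ℝ))⁻¹ * B n s ρ)
      ≤ (k : ℝ) * ((k : ℝ) - 1) / 2 := by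
    calc ∑ s ∈ Finset.Icc 1 (k - 1),
        ((k : ℝ) - (s : ℝ)) * (((n - 1).choose s : ℝ))⁻¹ * B n s ρ
        ≤ ∑ s ∈ Finset.Icc 1 (k - 1), ((k : ℝ) - (s : ℝ)) := by
          apply Finset.sum_le_sum
          intro s hs
          simp only [Finset.mem_Icc] at hs
          have hs1 : 1 ≤ s := hs.1
          have hsn : s + 1 ≤ n := by omega
          have hch : 0 < (n - 1).choose s := Nat.choose_pos (by omega)
          have hchR : (0:ℝ) < ((n - 1).choose s : ℝ) := by exact_mod_cast hch
          have hks : (0:ℝ) ≤ (k:ℝ) - (s:ℝ) := by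
            have : (s:ℝ) ≤ (k:ℝ) - 1 := by
              have : (s:ℝ) ≤ ((k-1:ℕ):ℝ) := by exact_mod_cast hs.2
              rwa [Nat.cast_sub (by omega), Nat.cast_one] at this
            linarith
          have hB := B_le n s ρ hρ hs1 hsn
          have hB0 := B_nonneg n s ρ hρ
          have : (((n - 1).choose s : ℝ))⁻¹ * B n s ρ ≤ 1 := by
            rw [← div_eq_inv_mul, div_le_one hchR]; exact hB
          calc ((k : ℝ) - (s : ℝ)) * (((n - 1).choose s : ℝ))⁻¹ * B n s ρ
              = ((k : ℝ) - (s : ℝ)) * ((((n - 1).choose s : ℝ))⁻¹ * B n s ρ) := by ring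
            _ ≤ ((k : ℝ) - (s : ℝ)) * 1 := by
                apply mul_le_mul_of_nonneg_left this hks
            _ = (k : ℝ) - (s : ℝ) := by ring
      _ = (k : ℝ) * ((k : ℝ) - 1) / 2 := gauss' k (by omega)
  have hc0 : (0:ℝ) ≤ θ₂ * (2 / ((k : ℝ) * ((k : ℝ) - 1))) * ((k : ℝ) / (n : ℝ)) := by
    have : (0:ℝ) < (k:ℝ) * ((k:ℝ) - 1) := by nlinarith
    positivity
  have hkk : (0:ℝ) < (k:ℝ) * ((k:ℝ) - 1) := by nlinarith
  have key : θ₂ * (2 / ((k : ℝ) * ((k : ℝ) - 1))) * ((k : ℝ) / (n : ℝ)) *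
        (∑ s ∈ Finset.Icc 1 (k - 1),
          ((k : ℝ) - (s : ℝ)) * (((n - 1).choose s : ℝ))⁻¹ * B n s ρ) ≤
      (k : ℝ) / (n : ℝ) * θ₂ := by
    calc _ ≤ θ₂ * (2 / ((k : ℝ) * ((k : ℝ) - 1))) * ((k : ℝ) / (n : ℝ)) *
          ((k : ℝ) * ((k : ℝ) - 1) / 2) := mul_le_mul_of_nonneg_left hS hc0
      _ = (k : ℝ) / (n : ℝ) * θ₂ := by
          field_simp
  refine ⟨key, ?_⟩
  have heq : ((n : ℝ) - (k : ℝ)) / (n : ℝ) * θ₂ = θ₂ - (k : ℝ) / (n : ℝ) * θ₂ := by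
    field_simp
  linarith
end

section
/- For every integer n ≥ 2 and every real ρ ≥ 0, the following identity holds: Σ_{s=1}^{n−1} (1/s)·C(n−1,s)^{-1}·B(n,s,ρ) = Σ_{s=1}^{n−1} 1/(s+ρ). Consequently, the expected Watterson estimator for a dispensable gene present in all n individuals equals θ₂·(Σ_{s=1}^{n−1} 1/(s+ρ))/(Σ_{s=1}^{n−1} 1/s). -/
open Finset

-- Lemma B: hockey stick reindexed
lemma lemB (N M : ℕ) (h : M ≤ N) :
    ∑ s ∈ range (M+1), (N - s).choose (M - s) = (N+1).choose M := by
  have h1 : ∀ s ∈ range (M+1), (N - s).choose (M - s) = ((M - s) + (N - M)).choose (N - M) := by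
    intro s hs
    rw [mem_range, Nat.lt_succ_iff] at hs
    have e : (M - s) + (N - M) = N - s := by omega
    rw [e]
    have e2 : M - s = (N - s) - (N - M) := by omega
    rw [e2, Nat.choose_symm (by omega)]
  rw [sum_congr rfl h1, ← Finset.sum_range_reflect]
  have h2 : ∀ j ∈ range (M+1), ((M - (M + 1 - 1 - j)) + (N - M)).choose (N - M)
      = (j + (N - M)).choose (N - M) := by
    intro j hj
    rw [mem_range, Nat.lt_succ_iff] at hj
    congr 2
    omega
  rw [sum_congr rfl h2, Nat.sum_range_add_choose]
  have e3 : M + (N - M) + 1 = N + 1 := by omega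
  rw [e3, ← Nat.choose_symm (by omega : M ≤ N + 1)]
  congr 1
  omega

-- Sub-lemma: Σ_{s=0}^{M} C(M,s)/C(N,s) = (N+1)/(N+1-M)
lemma lemC (N M : ℕ) (h : M ≤ N) :
    ∑ s ∈ range (M+1), (M.choose s : ℝ) / (N.choose s : ℝ)
      = ((N : ℝ) + 1) / ((N : ℝ) + 1 - M) := by
  have hNM : (0:ℝ) < (N.choose M : ℝ) := by exact_mod_cast Nat.choose_pos h
  have h1 : ∀ s ∈ range (M+1), (M.choose s : ℝ) / (N.choose s : ℝ)
      = ((N - s).choose (M - s) : ℝ) / (N.choose M : ℝ) := by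
    intro s hs
    rw [mem_range, Nat.lt_succ_iff] at hs
    have hNs : (0:ℝ) < (N.choose s : ℝ) := by
      exact_mod_cast Nat.choose_pos (hs.trans h)
    have keyR : (N.choose M : ℝ) * (M.choose s : ℝ)
        = (N.choose s : ℝ) * ((N - s).choose (M - s) : ℝ) := by
      exact_mod_cast Nat.choose_mul (n := N) hs
    field_simp
    linarith [keyR]
  rw [sum_congr rfl h1, ← Finset.sum_div]
  have hsum : (∑ s ∈ range (M+1), ((N - s).choose (M - s) : ℝ)) = ((N+1).choose M : ℝ) := by
    exact_mod_cast congrArg (Nat.cast (R := ℝ)) (lemB N M h)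
  rw [hsum]
  have key2R : (N.choose M : ℝ) * ((N:ℝ) + 1) = ((N+1).choose M : ℝ) * ((N:ℝ) + 1 - M) := by
    have e : ((N + 1 - M : ℕ) : ℝ) = (N:ℝ) + 1 - M := by
      have hM1 : M ≤ N + 1 := by omega
      push_cast [Nat.cast_sub hM1]
      ring
    rw [← e]
    exact_mod_cast Nat.choose_mul_succ_eq N M
  have hd : (0:ℝ) < (N:ℝ) + 1 - M := by
    have : (M:ℝ) ≤ N := by exact_mod_cast h
    linarith
  field_simp
  linarith [key2R]

-- Core: Σ_{s=1}^{M} (1/s)·C(N,s)⁻¹·C(M-1,s-1) = 1/(N+1-M)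
lemma keylem (N M : ℕ) (hM : 1 ≤ M) (hMN : M ≤ N) :
    ∑ s ∈ Icc 1 M, (1 / (s:ℝ)) * ((N.choose s : ℝ))⁻¹ * ((M-1).choose (s-1) : ℝ)
      = 1 / ((N:ℝ) + 1 - M) := by
  have hMpos : (0:ℝ) < M := by exact_mod_cast hM
  have h1 : ∀ s ∈ Icc 1 M, (1 / (s:ℝ)) * ((N.choose s : ℝ))⁻¹ * ((M-1).choose (s-1) : ℝ)
      = (1 / M) * ((M.choose s : ℝ) / (N.choose s : ℝ)) := by
    intro s hs
    rw [mem_Icc] at hs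
    obtain ⟨hs1, hsM⟩ := hs
    have hspos : (0:ℝ) < s := by exact_mod_cast hs1
    have e1 : (M - 1) + 1 = M := by omega
    have e2 : (s - 1) + 1 = s := by omega
    have nat1 : ((M-1)+1) * (M-1).choose (s-1) = ((M-1)+1).choose ((s-1)+1) * ((s-1)+1) :=
      Nat.add_one_mul_choose_eq (M-1) (s-1)
    rw [e1, e2] at nat1
    have natR : (M:ℝ) * ((M-1).choose (s-1) : ℝ) = (M.choose s : ℝ) * s := by exact_mod_cast nat1
    have hNs : (0:ℝ) < (N.choose s : ℝ) := by
      exact_mod_cast Nat.choose_pos (hsM.trans hMN)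
    have natR2 : (M:ℝ) * ((M-1).choose (s-1)) * (N.choose s)
        = (M.choose s) * s * (N.choose s) := by rw [natR]
    field_simp
    linarith [natR2]
  rw [sum_congr rfl h1, ← Finset.mul_sum]
  have hins : range (M+1) = insert 0 (Icc 1 M) := by
    ext x
    simp only [mem_range, mem_insert, mem_Icc]
    omega
  have h2 : ∑ s ∈ Icc 1 M, (M.choose s : ℝ) / (N.choose s : ℝ)
      = ((N : ℝ) + 1) / ((N : ℝ) + 1 - M) - 1 := by
    have := lemC N M hMN
    rw [hins, sum_insert (by simp)] at this
    simp only [Nat.choose_zero_right, Nat.cast_one] at this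
    linarith [this]
  rw [h2]
  have hd : (0:ℝ) < (N:ℝ) + 1 - M := by
    have : (M:ℝ) ≤ N := by exact_mod_cast hMN
    linarith
  field_simp
  ring

/-- `Σ_{s=1}^{n−1} (1/s)·C(n−1,s)⁻¹·B(n,s,ρ) = Σ_{s=1}^{n−1} 1/(s+ρ)`, so the
expected Watterson estimator for a gene present in all `n` individuals equals
`θ₂·(Σ 1/(s+ρ))/(Σ 1/s)`. -/
theorem stmt4 (n : ℕ) (hn : 2 ≤ n) (ρ : ℝ) (hρ : 0 ≤ ρ) :
    (∑ s ∈ Finset.Icc 1 (n - 1), (1 / (s : ℝ)) * (((n - 1).choose s : ℝ))⁻¹ * B n s ρ) =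
      (∑ s ∈ Finset.Icc 1 (n - 1), 1 / ((s : ℝ) + ρ)) ∧
    ∀ θ₂ : ℝ,
      θ₂ * (∑ s ∈ Finset.Icc 1 (n - 1), (1 / (s : ℝ)) * (((n - 1).choose s : ℝ))⁻¹ * B n s ρ) /
          (∑ s ∈ Finset.Icc 1 (n - 1), 1 / (s : ℝ)) =
        θ₂ * (∑ s ∈ Finset.Icc 1 (n - 1), 1 / ((s : ℝ) + ρ)) /
          (∑ s ∈ Finset.Icc 1 (n - 1), 1 / (s : ℝ)) := by
  have main : (∑ s ∈ Finset.Icc 1 (n - 1), (1 / (s : ℝ)) * (((n - 1).choose s : ℝ))⁻¹ * B n s ρ)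
      = (∑ s ∈ Finset.Icc 1 (n - 1), 1 / ((s : ℝ) + ρ)) := by
    -- Step 1: extend B's inner sum to range (n-1)
    have step1 : ∀ s ∈ Icc 1 (n-1), B n s ρ =
        ∑ j ∈ range (n-1), ((j : ℝ) + 1) / ((j : ℝ) + 1 + ρ) * ((n - j - 2).choose (s - 1) : ℝ) := by
      intro s hs
      rw [mem_Icc] at hs
      unfold B
      refine Finset.sum_subset ?_ ?_
      · intro j hj
        rw [mem_range] at hj ⊢
        omega

      · intro j hj hj'
        rw [mem_range] at hj hj'
        have : (n - j - 2).choose (s - 1) = 0 := Nat.choose_eq_zero_of_lt (by omega)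
        rw [this]
        simp
    rw [Finset.sum_congr rfl (fun s hs => by rw [step1 s hs])]
    -- Step 2: swap sums
    simp_rw [Finset.mul_sum]
    rw [Finset.sum_comm]
    -- Step 3: evaluate inner sum for each j
    have step3 : ∀ j ∈ range (n-1),
        (∑ s ∈ Icc 1 (n-1), (1 / (s : ℝ)) * (((n - 1).choose s : ℝ))⁻¹ *
          (((j : ℝ) + 1) / ((j : ℝ) + 1 + ρ) * ((n - j - 2).choose (s - 1) : ℝ)))
        = 1 / ((j : ℝ) + 1 + ρ) := by
      intro j hj
      rw [mem_range] at hj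
      set M : ℕ := n - 1 - j with hMdef
      have hM1 : 1 ≤ M := by omega
      have hMN : M ≤ n - 1 := by omega
      have hsplit : ∀ s ∈ Icc 1 (n-1), (1 / (s : ℝ)) * (((n - 1).choose s : ℝ))⁻¹ *
            (((j : ℝ) + 1) / ((j : ℝ) + 1 + ρ) * ((n - j - 2).choose (s - 1) : ℝ))
          = ((j : ℝ) + 1) / ((j : ℝ) + 1 + ρ) *
            ((1 / (s : ℝ)) * (((n - 1).choose s : ℝ))⁻¹ * (((M-1).choose (s - 1) : ℝ))) := by
        intro s hs
        have : n - j - 2 = M - 1 := by omega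
        rw [this]
        ring
      rw [Finset.sum_congr rfl hsplit, ← Finset.mul_sum]
      have hshrink : (∑ s ∈ Icc 1 (n-1), (1 / (s : ℝ)) * (((n - 1).choose s : ℝ))⁻¹ *
            (((M-1).choose (s - 1) : ℝ)))
          = ∑ s ∈ Icc 1 M, (1 / (s : ℝ)) * (((n - 1).choose s : ℝ))⁻¹ *
            (((M-1).choose (s - 1) : ℝ)) := by
        refine (Finset.sum_subset ?_ ?_).symm
        · intro s hs
          rw [mem_Icc] at hs ⊢
          omega
        · intro s hs hs'
          rw [mem_Icc] at hs hs'
          have : (M - 1).choose (s - 1) = 0 := Nat.choose_eq_zero_of_lt (by omega)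
          rw [this]
          simp
      rw [hshrink, keylem (n-1) M hM1 hMN]
      have hc : ((n-1 : ℕ) : ℝ) + 1 - ((M : ℕ) : ℝ) = (j : ℝ) + 1 := by
        have e1 : ((n-1 : ℕ) : ℝ) = (n : ℝ) - 1 := by
          rw [Nat.cast_sub (by omega)]; simp
        have e2 : ((M : ℕ) : ℝ) = (n : ℝ) - 1 - j := by
          rw [hMdef, Nat.cast_sub (by omega), Nat.cast_sub (by omega)]; simp
        rw [e1, e2]; ring
      rw [hc]
      have hjpos : (0:ℝ) < (j : ℝ) + 1 := by positivity
      have hjρ : (0:ℝ) < (j : ℝ) + 1 + ρ := by linarith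
      field_simp
    rw [Finset.sum_congr rfl step3]
    -- Step 4: reindex
    have e : Icc 1 (n-1) = Ico 1 n := by
      rw [← Finset.Ico_add_one_right_eq_Icc]
      congr 1
      omega
    rw [e, Finset.sum_Ico_eq_sum_range]
    refine (Finset.sum_congr rfl fun j hj => ?_).symm
    push_cast
    ring_nf
  refine ⟨main, fun θ₂ => by rw [main]⟩
end

section
/- For every integer n ≥ 2 and every real ρ ≥ 0, the following identity holds: (2/(n(n−1)))·Σ_{s=1}^{n−1} (n−s)·C(n−1,s)^{-1}·B(n,s,ρ) = 1 − 2ρ·((n+1)/(n−1))·Σ_{j=0}^{n−2} 1/((j+1+ρ)(j+2)(j+3)). Consequently, the expected Tajima estimator for a dispensable gene present in all n individuals equals θ₂·(1 − 2ρ·((n+1)/(n−1))·Σ_{j=0}^{n−2} 1/((j+1+ρ)(j+2)(j+3))). -/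
open Finset

lemma cast_choose_step (m r : ℕ) :
    ((r : ℝ) + 1) * (m.choose (r + 1) : ℝ) = ((m : ℝ) - r) * (m.choose r : ℝ) := by
  rcases le_or_gt (r + 1) m with h | h
  · have hn := Nat.choose_succ_right_eq m r
    have hc : ((m - r : ℕ) : ℝ) = (m : ℝ) - r := by rw [Nat.cast_sub (by omega)]
    have := congrArg (fun x : ℕ => (x : ℝ)) hn
    push_cast at this
    rw [← hc]
    linarith
  · have h1 : m.choose (r + 1) = 0 := Nat.choose_eq_zero_of_lt h
    rcases Nat.lt_or_ge m r with h2 | h2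
    · simp [h1, Nat.choose_eq_zero_of_lt h2]
    · have hm : m = r := by omega
      subst hm
      simp [h1]

lemma choose_nminus1 (n k : ℕ) (hn : 1 ≤ n) :
    (n : ℝ) * ((n - 1).choose k : ℝ) = ((n : ℝ) - k) * (n.choose k : ℝ) := by
  rcases le_or_gt k (n - 1) with h | h
  · have h1 := Nat.add_one_mul_choose_eq (n - 1) k
    have hsn : n - 1 + 1 = n := by omega
    rw [hsn] at h1
    have h2 := Nat.choose_succ_right_eq n k
    have h3 : n * (n - 1).choose k = n.choose k * (n - k) := by rw [h1, h2]
    have := congrArg (fun x : ℕ => (x : ℝ)) h3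
    push_cast [Nat.cast_sub (by omega : k ≤ n)] at this
    linarith
  · have h1 : (n - 1).choose k = 0 := Nat.choose_eq_zero_of_lt (by omega)
    rcases Nat.lt_or_ge n k with h2 | h2
    · simp [h1, Nat.choose_eq_zero_of_lt h2]
    · have : k = n := by omega
      subst this
      simp [h1]

lemma Psum (n m : ℕ) (hn : 2 ≤ n) (hm : m + 2 ≤ n) :
    ∀ r, r ≤ n - 1 →
    ∑ s ∈ Finset.Icc 1 r, ((n : ℝ) - s) * (((n - 1).choose s : ℝ))⁻¹ * (m.choose (s - 1) : ℝ)
      = (n : ℝ) * ((n : ℝ) + 1) / (((n : ℝ) - m) * ((n : ℝ) - m + 1))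
        - (n : ℝ) * (m.choose r : ℝ) * ((r : ℝ) * ((n : ℝ) - m) + (n : ℝ) + 1)
            / ((n.choose r : ℝ) * ((n : ℝ) - m) * ((n : ℝ) - m + 1)) := by
  intro r
  induction r with
  | zero =>
    intro _
    simp only [Finset.Icc_self, Nat.choose_zero_right]
    norm_num
  | succ r ih =>
    intro hr
    have hr' : r ≤ n - 1 := by omega
    rw [Finset.sum_Icc_succ_top (by omega : 1 ≤ r + 1), ih hr']
    have hs1 : (r + 1 - 1 : ℕ) = r := by omega
    rw [hs1]
    have hd : (0:ℝ) < (n:ℝ) - m := by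
      have : (m:ℝ) + 2 ≤ (n:ℝ) := by exact_mod_cast hm
      linarith
    have hd1 : (0:ℝ) < (n:ℝ) - m + 1 := by linarith
    have ha : (0:ℝ) < (n.choose r : ℝ) := by
      exact_mod_cast Nat.choose_pos (by omega : r ≤ n)
    have hb : (0:ℝ) < (n.choose (r+1) : ℝ) := by
      exact_mod_cast Nat.choose_pos (by omega : r + 1 ≤ n)
    have he : (0:ℝ) < ((n-1).choose (r+1) : ℝ) := by
      exact_mod_cast Nat.choose_pos (by omega : r + 1 ≤ n - 1)
    have hnr1 : (0:ℝ) < (n:ℝ) - r - 1 := by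
      have : (r:ℝ) + 2 ≤ (n:ℝ) := by exact_mod_cast (by omega : r + 2 ≤ n)
      linarith
    have hnr : (0:ℝ) < (n:ℝ) - r := by linarith
    have hx : (0:ℝ) < (n:ℝ) := by linarith
    have hr1 : (0:ℝ) < (r:ℝ) + 1 := by positivity
    set x : ℝ := (n : ℝ) with hxdef
    set a : ℝ := (n.choose r : ℝ) with hadef
    set b : ℝ := (n.choose (r+1) : ℝ) with hbdef
    set e : ℝ := ((n-1).choose (r+1) : ℝ) with hedef
    set c : ℝ := (m.choose r : ℝ) with hcdef
    set c' : ℝ := (m.choose (r+1) : ℝ) with hc'def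
    have h1 : ((r:ℝ) + 1) * b = (x - r) * a := cast_choose_step n r
    have h3 : ((r:ℝ) + 1) * c' = ((m:ℝ) - r) * c := cast_choose_step m r
    have h2 : x * e = (x - ((r:ℝ)+1)) * b := by
      have := choose_nminus1 n (r+1) (by omega)
      push_cast at this
      linarith
    -- t = flat form
    have he3 : (x - ((r:ℝ)+1)) * e⁻¹ * c = ((r:ℝ)+1) * x * c / ((x - r) * a) := by
      rw [eq_div_iff (by positivity)]
      have hee : e⁻¹ * e = 1 := inv_mul_cancel₀ (ne_of_gt he)
      have key : (x - ((r:ℝ)+1)) * c * ((x - r) * a) = ((r:ℝ)+1) * x * c * e := by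
        linear_combination (-(((r:ℝ)+1) * c)) * h2 + (-((x - ((r:ℝ)+1)) * c)) * h1
      calc (x - ((r:ℝ)+1)) * e⁻¹ * c * ((x-r)*a)
          = e⁻¹ * ((x - ((r:ℝ)+1)) * c * ((x-r)*a)) := by ring
        _ = e⁻¹ * (((r:ℝ)+1) * x * c * e) := by rw [key]
        _ = ((r:ℝ)+1) * x * c * (e⁻¹ * e) := by ring
        _ = ((r:ℝ)+1) * x * c := by rw [hee]; ring
    -- T_{r+1} = flat form
    have hT3 : x * c' * (((r:ℝ)+1) * (x - m) + x + 1) / (b * (x - m) * (x - m + 1))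
        = x * (((m:ℝ) - r) * c) * (((r:ℝ)+1) * (x - m) + x + 1)
            / (((x - r) * a) * (x - m) * (x - m + 1)) := by
      rw [div_eq_div_iff (by positivity) (by positivity)]
      linear_combination (-(x * (((r:ℝ)+1)*(x-m)+x+1) * (x-m) * (x-m+1) * c')) * h1
        + (x * (((r:ℝ)+1)*(x-m)+x+1) * (x-m) * (x-m+1) * b) * h3
    -- flat telescoping identity
    have hflat : ((r:ℝ)+1) * x * c / ((x - r) * a)
        = x * c * ((r:ℝ) * (x - m) + x + 1) / (a * (x - m) * (x - m + 1))
          - x * (((m:ℝ) - r) * c) * (((r:ℝ)+1) * (x - m) + x + 1)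
              / (((x - r) * a) * (x - m) * (x - m + 1)) := by
      field_simp
      ring
    push_cast
    linarith [he3, hT3, hflat]

lemma key (n j : ℕ) (hn : 2 ≤ n) (hj : j + 2 ≤ n) :
    ∑ s ∈ Finset.Icc 1 (n - 1),
        ((n : ℝ) - s) * (((n - 1).choose s : ℝ))⁻¹ * ((n - j - 2).choose (s - 1) : ℝ)
      = (n : ℝ) * ((n : ℝ) + 1) / (((j : ℝ) + 2) * ((j : ℝ) + 3)) := by
  have hP := Psum n (n - j - 2) hn (by omega) (n - 1) le_rfl
  have hz : (n - j - 2).choose (n - 1) = 0 := Nat.choose_eq_zero_of_lt (by omega)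
  rw [hz] at hP
  have hc : ((n - j - 2 : ℕ) : ℝ) = (n : ℝ) - ((j : ℝ) + 2) := by
    rw [show n - j - 2 = n - (j + 2) from by omega, Nat.cast_sub hj]
    push_cast
    ring
  rw [hc] at hP
  rw [hP]
  have h2 : (n:ℝ) - ((n:ℝ) - ((j:ℝ)+2)) = (j:ℝ) + 2 := by ring
  rw [h2]
  have h3 : ((j:ℝ)+2) + 1 = (j:ℝ) + 3 := by ring
  rw [h3]
  simp

lemma tele (k : ℕ) :
    ∑ j ∈ Finset.range k, 1 / (((j : ℝ) + 2) * ((j : ℝ) + 3)) = (k : ℝ) / (2 * ((k : ℝ) + 2)) := by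
  induction k with
  | zero => simp
  | succ k ih =>
    rw [Finset.sum_range_succ, ih]
    have h1 : ((k:ℝ) + 2) ≠ 0 := by positivity
    have h2 : ((k:ℝ) + 3) ≠ 0 := by positivity
    push_cast
    field_simp
    ring


/-- `(2/(n(n−1)))·Σ_{s=1}^{n−1}(n−s)·C(n−1,s)⁻¹·B(n,s,ρ)
= 1 − 2ρ·((n+1)/(n−1))·Σ_{j=0}^{n−2} 1/((j+1+ρ)(j+2)(j+3))`, so the expected Tajima
estimator for a gene present in all `n` individuals equals `θ₂` times the right-hand side. -/
theorem stmt5 (n : ℕ) (hn : 2 ≤ n) (ρ : ℝ) (hρ : 0 ≤ ρ) :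
    (2 / ((n : ℝ) * ((n : ℝ) - 1))) *
        (∑ s ∈ Finset.Icc 1 (n - 1),
          ((n : ℝ) - (s : ℝ)) * (((n - 1).choose s : ℝ))⁻¹ * B n s ρ) =
      1 - 2 * ρ * (((n : ℝ) + 1) / ((n : ℝ) - 1)) *
        (∑ j ∈ Finset.range (n - 1),
          1 / (((j : ℝ) + 1 + ρ) * ((j : ℝ) + 2) * ((j : ℝ) + 3))) ∧
    ∀ θ₂ : ℝ,
      θ₂ * ((2 / ((n : ℝ) * ((n : ℝ) - 1))) *
          (∑ s ∈ Finset.Icc 1 (n - 1),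
            ((n : ℝ) - (s : ℝ)) * (((n - 1).choose s : ℝ))⁻¹ * B n s ρ)) =
        θ₂ * (1 - 2 * ρ * (((n : ℝ) + 1) / ((n : ℝ) - 1)) *
          (∑ j ∈ Finset.range (n - 1),
            1 / (((j : ℝ) + 1 + ρ) * ((j : ℝ) + 2) * ((j : ℝ) + 3)))) := by
  
  have hB : ∀ s ∈ Finset.Icc 1 (n - 1), B n s ρ =
      ∑ j ∈ Finset.range (n - 1),
        ((j : ℝ) + 1) / ((j : ℝ) + 1 + ρ) * ((n - j - 2).choose (s - 1) : ℝ) := by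
    intro s hs
    rw [Finset.mem_Icc] at hs
    refine Finset.sum_subset (Finset.range_subset_range.mpr (by omega)) ?_
    intro j hjt hjs
    rw [Finset.mem_range] at hjt
    have hjs' : n - s ≤ j := by
      by_contra h
      exact hjs (Finset.mem_range.mpr (by omega))
    rw [Nat.choose_eq_zero_of_lt (by omega : n - j - 2 < s - 1)]
    simp
  have main : ∑ s ∈ Finset.Icc 1 (n - 1),
        ((n : ℝ) - (s : ℝ)) * (((n - 1).choose s : ℝ))⁻¹ * B n s ρ
      = ∑ j ∈ Finset.range (n - 1),
          ((j : ℝ) + 1) / ((j : ℝ) + 1 + ρ) *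
            ((n : ℝ) * ((n : ℝ) + 1) / (((j : ℝ) + 2) * ((j : ℝ) + 3))) := by
    rw [Finset.sum_congr rfl (fun s hs => by rw [hB s hs, Finset.mul_sum]), Finset.sum_comm]
    refine Finset.sum_congr rfl (fun j hj => ?_)
    have hj2 : j + 2 ≤ n := by
      rw [Finset.mem_range] at hj
      omega
    rw [← key n j hn hj2, Finset.mul_sum]
    exact Finset.sum_congr rfl (fun s _ => by ring)
  have split : ∀ j ∈ Finset.range (n - 1),
      ((j : ℝ) + 1) / ((j : ℝ) + 1 + ρ) *
          ((n : ℝ) * ((n : ℝ) + 1) / (((j : ℝ) + 2) * ((j : ℝ) + 3)))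
        = (n : ℝ) * ((n : ℝ) + 1) * (1 / (((j : ℝ) + 2) * ((j : ℝ) + 3)))
          - ρ * ((n : ℝ) * ((n : ℝ) + 1)) *
              (1 / (((j : ℝ) + 1 + ρ) * ((j : ℝ) + 2) * ((j : ℝ) + 3))) := by
    intro j _
    have h0 : (j : ℝ) + 1 + ρ ≠ 0 := by positivity
    have h2 : (j : ℝ) + 2 ≠ 0 := by positivity
    have h3 : (j : ℝ) + 3 ≠ 0 := by positivity
    field_simp
    ring
  have hcast : ((n - 1 : ℕ) : ℝ) = (n : ℝ) - 1 := by
    rw [Nat.cast_sub (by omega)]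
    norm_num
  have H : (2 / ((n : ℝ) * ((n : ℝ) - 1))) *
        (∑ s ∈ Finset.Icc 1 (n - 1),
          ((n : ℝ) - (s : ℝ)) * (((n - 1).choose s : ℝ))⁻¹ * B n s ρ) =
      1 - 2 * ρ * (((n : ℝ) + 1) / ((n : ℝ) - 1)) *
        (∑ j ∈ Finset.range (n - 1),
          1 / (((j : ℝ) + 1 + ρ) * ((j : ℝ) + 2) * ((j : ℝ) + 3))) := by
    rw [main, Finset.sum_congr rfl split, Finset.sum_sub_distrib, ← Finset.mul_sum,
      ← Finset.mul_sum, tele (n - 1), hcast]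
    have hn0 : (n : ℝ) ≠ 0 := by positivity
    have hn1 : (n : ℝ) - 1 ≠ 0 := by
      have : (2 : ℝ) ≤ (n : ℝ) := by exact_mod_cast hn
      intro h
      linarith
    have hn2 : (n : ℝ) + 1 ≠ 0 := by positivity
    have hn3 : (n : ℝ) - 1 + 2 = (n : ℝ) + 1 := by ring
    rw [hn3]
    field_simp
  exact ⟨H, fun θ₂ => by rw [H]⟩
end

section
/- For all integers 1 ≤ s < k ≤ n and every real ρ > 0, the following identity over the reals holds: Σ_{m=1}^{k−s+1} m·s!·(Π_{b=m−1}^{k−s−1} b)·(Π_{b=m}^{k−1} b)^{-1}·C(k−m, s−1)·Σ_{j=1}^{n} C(j, m)·C(n−j, k−m)·(1/(j(j−1+ρ))) = C(n,k)·(k/n)·C(n−1,s)^{-1}·Σ_{j=0}^{n−s−1} ((j+1)/(j+1+ρ))·C(n−j−2, s−1). (This is the key combinatorial identity establishing the closed form of the expected joint gene and site frequency spectrum E[G_{k,s}] for s < k.) -/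
open Finset

/-- Vandermonde in range form. -/
lemma vanderRange (a b K : ℕ) :
    ∑ i ∈ Finset.range (K + 1), a.choose i * b.choose (K - i) = (a + b).choose K := by
  rw [Nat.add_choose_eq, Finset.Nat.sum_antidiagonal_eq_sum_range_succ_mk]

/-- `(m+2)(m+1)·C(j,m+2) = j(j−1)·C(j−2,m)`. -/
lemma degLower (j m : ℕ) :
    (m + 2) * (m + 1) * j.choose (m + 2) = j * (j - 1) * (j - 2).choose m := by
  match j with
  | 0 => simp
  | 1 => simp [Nat.choose_eq_zero_of_lt (by omega : 1 < m + 2)]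
  | (j + 2) =>
    have h1 := Nat.add_one_mul_choose_eq (j + 1) (m + 1)
    have h2 := Nat.add_one_mul_choose_eq j m
    have e1 : j + 2 - 1 = j + 1 := rfl
    have e2 : j + 2 - 2 = j := rfl
    rw [e1, e2]
    zify at h1 h2 ⊢
    linear_combination (-(m:ℤ) - 1) * h1 - ((j:ℤ) + 2) * h2

/-- Unconditional (given `c ≤ b`) subset-of-subset identity. -/
lemma chooseMul (a b c : ℕ) (h : c ≤ b) :
    a.choose b * b.choose c = a.choose c * (a - c).choose (b - c) := by
  rcases le_or_gt b a with hba | hba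
  · exact Nat.choose_mul h
  · rw [Nat.choose_eq_zero_of_lt hba, Nat.zero_mul]
    rcases le_or_gt c a with hca | hca
    · rw [Nat.choose_eq_zero_of_lt (by omega : a - c < b - c), Nat.mul_zero]
    · rw [Nat.choose_eq_zero_of_lt hca, Nat.zero_mul]

/-- The key per-`j` natural number identity. -/
lemma keyNat (n k s j : ℕ) (hs : 1 ≤ s) (hsk : s < k) (hkn : k ≤ n) (hjn : j ≤ n) :
    ∑ m ∈ Finset.Icc 1 (k - s + 1),
        m * (m - 1) * ((k - m).choose (s - 1)) * j.choose m * ((n - j).choose (k - m))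
      = j * (j - 1) * ((n - s - 1).choose (k - s - 1)) * ((n - j).choose (s - 1)) := by
  have hks : 1 ≤ k - s := by omega
  rw [show Finset.Icc 1 (k - s + 1) = Finset.Ico 1 (k - s + 2) from by
    rw [← Finset.Ico_add_one_right_eq_Icc, add_assoc, one_add_one_eq_two]]
  rw [Finset.sum_Ico_eq_sum_range]
  rw [show k - s + 2 - 1 = (k - s) + 1 from by omega]
  rw [Finset.sum_range_succ']
  have hfirst : (1 + 0) * (1 + 0 - 1) * ((k - (1 + 0)).choose (s - 1)) * j.choose (1 + 0) *
      ((n - j).choose (k - (1 + 0))) = 0 := by norm_num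
  rw [hfirst, add_zero]
  have hstep : ∀ i ∈ Finset.range (k - s),
      (1 + (i + 1)) * (1 + (i + 1) - 1) * ((k - (1 + (i + 1))).choose (s - 1)) *
          j.choose (1 + (i + 1)) * ((n - j).choose (k - (1 + (i + 1))))
        = j * (j - 1) * ((n - j).choose (s - 1)) *
            ((j - 2).choose i * (n - j - (s - 1)).choose (k - s - 1 - i)) := by
    intro i hi
    rw [Finset.mem_range] at hi
    rw [show 1 + (i + 1) = i + 2 from by omega]
    rw [show i + 2 - 1 = i + 1 from rfl]
    rw [show k - (i + 2) = k - i - 2 from by omega]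
    have h1 := degLower j i
    have h2 := chooseMul (n - j) (k - i - 2) (s - 1) (by omega)
    rw [show k - i - 2 - (s - 1) = k - s - 1 - i from by omega] at h2
    calc (i + 2) * (i + 1) * ((k - i - 2).choose (s - 1)) * j.choose (i + 2) *
          ((n - j).choose (k - i - 2))
        = ((i + 2) * (i + 1) * j.choose (i + 2)) *
            (((n - j).choose (k - i - 2)) * ((k - i - 2).choose (s - 1))) := by ring
      _ = (j * (j - 1) * (j - 2).choose i) *
            (((n - j).choose (s - 1)) * ((n - j - (s - 1)).choose (k - s - 1 - i))) := by
          rw [h1, h2]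
      _ = j * (j - 1) * ((n - j).choose (s - 1)) *
            ((j - 2).choose i * (n - j - (s - 1)).choose (k - s - 1 - i)) := by ring
  rw [Finset.sum_congr rfl hstep, ← Finset.mul_sum]
  rcases lt_or_ge j 2 with hj2 | hj2
  · interval_cases j <;> simp
  rcases lt_or_ge (n - j) (s - 1) with hnj | hnj
  · rw [Nat.choose_eq_zero_of_lt hnj]
    ring
  · have hsum : ∑ i ∈ Finset.range (k - s),
        (j - 2).choose i * (n - j - (s - 1)).choose (k - s - 1 - i)
          = (n - s - 1).choose (k - s - 1) := by
      have hv := vanderRange (j - 2) (n - j - (s - 1)) (k - s - 1)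
      rw [show k - s - 1 + 1 = k - s from by omega,
        show j - 2 + (n - j - (s - 1)) = n - s - 1 from by omega] at hv
      exact hv
    rw [hsum]
    ring

/-- Product of an interval of integers as a ratio of factorials (ℕ version). -/
lemma prodIccNat (a c : ℕ) (ha : 1 ≤ a) (hac : a ≤ c + 1) :
    (a - 1).factorial * (∏ b ∈ Finset.Icc a c, b) = c.factorial := by
  have h1 : Finset.Icc a c = Finset.Ioc (a - 1) c := by
    rw [show a = (a - 1) + 1 from by omega, Finset.Icc_add_one_left_eq_Ioc]
    congr 1
  have h2 : ∀ t : ℕ, (∏ b ∈ Finset.Ioc 0 t, b) = t.factorial := by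
    intro t
    rw [← Finset.Icc_add_one_left_eq_Ioc, ← Finset.Ico_add_one_right_eq_Icc, zero_add, Finset.prod_Ico_id_eq_factorial]
  rw [h1, ← h2 c, ← h2 (a - 1)]
  exact Finset.prod_Ioc_consecutive _ (Nat.zero_le _) (by omega : a - 1 ≤ c)

/-- the key combinatorial identity for the joint gene and site frequency
spectrum `E[G_{k,s}]` in the case `s < k`. -/
theorem stmt7 (n k s : ℕ) (hs : 1 ≤ s) (hsk : s < k) (hkn : k ≤ n) (ρ : ℝ) (hρ : 0 < ρ) :
    (∑ m ∈ Finset.Icc 1 (k - s + 1),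
      (m : ℝ) * (Nat.factorial s : ℝ) * (∏ b ∈ Finset.Icc (m - 1) (k - s - 1), (b : ℝ)) *
        (∏ b ∈ Finset.Icc m (k - 1), (b : ℝ))⁻¹ * ((k - m).choose (s - 1) : ℝ) *
        (∑ j ∈ Finset.Icc 1 n,
          (j.choose m : ℝ) * ((n - j).choose (k - m) : ℝ) *
            (1 / ((j : ℝ) * ((j : ℝ) - 1 + ρ))))) =
      (n.choose k : ℝ) * ((k : ℝ) / (n : ℝ)) * (((n - 1).choose s : ℝ))⁻¹ *
        (∑ j ∈ Finset.range (n - s),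
          ((j : ℝ) + 1) / ((j : ℝ) + 1 + ρ) * ((n - j - 2).choose (s - 1) : ℝ)) := by
  have hn2 : 2 ≤ n := by omega
  set A : ℝ := (s.factorial : ℝ) * ((k - s - 1).factorial : ℝ) / ((k - 1).factorial : ℝ)
    with hA
  have hfk : ((k - 1).factorial : ℝ) ≠ 0 := Nat.cast_ne_zero.mpr (Nat.factorial_ne_zero _)
  -- coefficient simplification
  have hcoef : ∀ m ∈ Finset.Icc 1 (k - s + 1),
      (m : ℝ) * (Nat.factorial s : ℝ) * (∏ b ∈ Finset.Icc (m - 1) (k - s - 1), (b : ℝ)) *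
        (∏ b ∈ Finset.Icc m (k - 1), (b : ℝ))⁻¹
      = A * (m : ℝ) * ((m : ℝ) - 1) := by
    intro m hm
    rw [Finset.mem_Icc] at hm
    obtain ⟨hm1, hm2⟩ := hm
    rcases eq_or_lt_of_le hm1 with rfl | h1
    · have h0 : (∏ b ∈ Finset.Icc (1 - 1) (k - s - 1), (b : ℝ)) = 0 := by
        refine Finset.prod_eq_zero (i := 0) ?_ (by norm_num)
        simp [Finset.mem_Icc]
      rw [h0]
      norm_num
    · have hm2' : (2 : ℕ) ≤ m := h1
      have hP := prodIccNat (m - 1) (k - s - 1) (by omega) (by omega)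
      rw [show m - 1 - 1 = m - 2 from by omega] at hP
      have hQ := prodIccNat m (k - 1) (by omega) (by omega)
      have hPc : ((m - 2).factorial : ℝ) * (∏ b ∈ Finset.Icc (m - 1) (k - s - 1), (b : ℝ))
          = ((k - s - 1).factorial : ℝ) := by
        have h := congrArg (Nat.cast : ℕ → ℝ) hP
        push_cast at h
        exact h
      have hQc : ((m - 1).factorial : ℝ) * (∏ b ∈ Finset.Icc m (k - 1), (b : ℝ))
          = ((k - 1).factorial : ℝ) := by
        have h := congrArg (Nat.cast : ℕ → ℝ) hQ
        push_cast at h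
        exact h
      have hfm2 : ((m - 2).factorial : ℝ) ≠ 0 := Nat.cast_ne_zero.mpr (Nat.factorial_ne_zero _)
      have hfm1 : ((m - 1).factorial : ℝ) ≠ 0 := Nat.cast_ne_zero.mpr (Nat.factorial_ne_zero _)
      have hm1ne : (m : ℝ) - 1 ≠ 0 := by
        have : (2 : ℝ) ≤ (m : ℝ) := by exact_mod_cast hm2'
        linarith
      have hfm : ((m - 1).factorial : ℝ) = ((m : ℝ) - 1) * ((m - 2).factorial : ℝ) := by
        rw [show m - 1 = (m - 2) + 1 from by omega, Nat.factorial_succ, Nat.cast_mul,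
          Nat.cast_add, Nat.cast_sub hm2']
        push_cast
        ring
      have hPv : (∏ b ∈ Finset.Icc (m - 1) (k - s - 1), (b : ℝ))
          = ((k - s - 1).factorial : ℝ) / ((m - 2).factorial : ℝ) := by
        rw [eq_div_iff hfm2, mul_comm]
        exact hPc
      have hQv : (∏ b ∈ Finset.Icc m (k - 1), (b : ℝ))
          = ((k - 1).factorial : ℝ) / (((m : ℝ) - 1) * ((m - 2).factorial : ℝ)) := by
        rw [eq_div_iff (mul_ne_zero hm1ne hfm2), mul_comm, ← hfm]
        exact hQc
      rw [hPv, hQv, hA]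
      field_simp
  -- constants identity
  have c1 : n * (n - 1).choose (k - 1) = n.choose k * k := by
    have h := Nat.add_one_mul_choose_eq (n - 1) (k - 1)
    rwa [show n - 1 + 1 = n from by omega, show k - 1 + 1 = k from by omega] at h
  have c2 : (n - 1).choose (k - 1) * (k - 1).choose s
      = (n - 1).choose s * ((n - s - 1).choose (k - s - 1)) := by
    have h := Nat.choose_mul (n := n - 1) (show s ≤ k - 1 from by omega)
    rwa [show n - 1 - s = n - s - 1 from by omega, show k - 1 - s = k - s - 1 from by omega] at h
  have c3 : (k - 1).choose s * s.factorial * (k - s - 1).factorial = (k - 1).factorial := by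
    have h := Nat.choose_mul_factorial_mul_factorial (show s ≤ k - 1 from by omega)
    rwa [show k - 1 - s = k - s - 1 from by omega] at h
  have c4 : n.choose k * k * (k - 1).factorial
      = n * ((n - 1).choose s * ((n - s - 1).choose (k - s - 1))
          * (s.factorial * (k - s - 1).factorial)) := by
    calc n.choose k * k * (k - 1).factorial
        = n * (n - 1).choose (k - 1) * (k - 1).factorial := by rw [c1]
      _ = n * (n - 1).choose (k - 1) * ((k - 1).choose s * s.factorial * (k - s - 1).factorial)
          := by rw [c3]
      _ = n * ((n - 1).choose (k - 1) * (k - 1).choose s) *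
            (s.factorial * (k - s - 1).factorial) := by ring
      _ = n * ((n - 1).choose s * ((n - s - 1).choose (k - s - 1))) *
            (s.factorial * (k - s - 1).factorial) := by rw [c2]
      _ = _ := by ring
  have c4' : (n.choose k : ℝ) * (k : ℝ) * ((k - 1).factorial : ℝ)
      = (n : ℝ) * (((n - 1).choose s : ℝ) * (((n - s - 1).choose (k - s - 1) : ℕ) : ℝ)
          * ((s.factorial : ℝ) * ((k - s - 1).factorial : ℝ))) := by exact_mod_cast c4
  have hn0 : (n : ℝ) ≠ 0 := by positivity
  have hcs : (((n - 1).choose s : ℕ) : ℝ) ≠ 0 :=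
    Nat.cast_ne_zero.mpr (Nat.choose_pos (by omega)).ne'
  have hconst : (n.choose k : ℝ) * ((k : ℝ) / (n : ℝ)) * (((n - 1).choose s : ℝ))⁻¹
      = A * (((n - s - 1).choose (k - s - 1) : ℕ) : ℝ) := by
    rw [hA]
    field_simp
    linear_combination c4'
  -- main chain
  have step1 :
      (∑ m ∈ Finset.Icc 1 (k - s + 1),
        (m : ℝ) * (Nat.factorial s : ℝ) * (∏ b ∈ Finset.Icc (m - 1) (k - s - 1), (b : ℝ)) *
          (∏ b ∈ Finset.Icc m (k - 1), (b : ℝ))⁻¹ * ((k - m).choose (s - 1) : ℝ) *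
          (∑ j ∈ Finset.Icc 1 n,
            (j.choose m : ℝ) * ((n - j).choose (k - m) : ℝ) *
              (1 / ((j : ℝ) * ((j : ℝ) - 1 + ρ)))))
      = ∑ j ∈ Finset.Icc 1 n, ∑ m ∈ Finset.Icc 1 (k - s + 1),
          A * ((m * (m - 1) * ((k - m).choose (s - 1)) * j.choose m *
            ((n - j).choose (k - m)) : ℕ) : ℝ) * (1 / ((j : ℝ) * ((j : ℝ) - 1 + ρ))) := by
    rw [Finset.sum_comm]
    refine Finset.sum_congr rfl fun m hm => ?_
    rw [mul_assoc, Finset.mul_sum, Finset.mul_sum]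
    refine Finset.sum_congr rfl fun j hj => ?_
    have hc := hcoef m hm
    rw [Finset.mem_Icc] at hm
    have hmc : ((m - 1 : ℕ) : ℝ) = (m : ℝ) - 1 := by
      rw [Nat.cast_sub hm.1]; norm_num
    push_cast [hmc]
    linear_combination (((k - m).choose (s - 1) : ℝ) * ((j.choose m : ℝ) *
      ((n - j).choose (k - m) : ℝ) * (1 / ((j : ℝ) * ((j : ℝ) - 1 + ρ))))) * hc
  rw [step1]
  have step2 : ∀ j ∈ Finset.Icc 1 n,
      (∑ m ∈ Finset.Icc 1 (k - s + 1),
        A * ((m * (m - 1) * ((k - m).choose (s - 1)) * j.choose m *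
          ((n - j).choose (k - m)) : ℕ) : ℝ) * (1 / ((j : ℝ) * ((j : ℝ) - 1 + ρ))))
      = A * (((n - s - 1).choose (k - s - 1) : ℕ) : ℝ) *
          ((((j : ℝ)) - 1) / (((j : ℝ)) - 1 + ρ)) * (((n - j).choose (s - 1) : ℕ) : ℝ) := by
    intro j hj
    rw [Finset.mem_Icc] at hj
    have hsum : ∑ m ∈ Finset.Icc 1 (k - s + 1),
        A * ((m * (m - 1) * ((k - m).choose (s - 1)) * j.choose m *
          ((n - j).choose (k - m)) : ℕ) : ℝ) * (1 / ((j : ℝ) * ((j : ℝ) - 1 + ρ)))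
        = A * ((∑ m ∈ Finset.Icc 1 (k - s + 1),
            m * (m - 1) * ((k - m).choose (s - 1)) * j.choose m *
              ((n - j).choose (k - m)) : ℕ) : ℝ) * (1 / ((j : ℝ) * ((j : ℝ) - 1 + ρ))) := by
      rw [Nat.cast_sum, Finset.mul_sum, Finset.sum_mul]
    rw [hsum, keyNat n k s j hs hsk hkn hj.2]
    have hj1 : (1 : ℝ) ≤ (j : ℝ) := by exact_mod_cast hj.1
    have hd1 : (j : ℝ) ≠ 0 := by linarith
    have hd2 : (j : ℝ) - 1 + ρ ≠ 0 := by linarith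
    have hjc : ((j - 1 : ℕ) : ℝ) = (j : ℝ) - 1 := by
      rw [Nat.cast_sub hj.1]; norm_num
    push_cast [hjc]
    field_simp
  rw [Finset.sum_congr rfl step2]
  -- reindex the j-sum
  have step3 : (∑ j ∈ Finset.Icc 1 n,
      A * (((n - s - 1).choose (k - s - 1) : ℕ) : ℝ) *
        ((((j : ℝ)) - 1) / (((j : ℝ)) - 1 + ρ)) * (((n - j).choose (s - 1) : ℕ) : ℝ))
      = A * (((n - s - 1).choose (k - s - 1) : ℕ) : ℝ) *
        ∑ i ∈ Finset.range (n - 1),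
          (((i : ℝ)) + 1) / (((i : ℝ)) + 1 + ρ) * (((n - i - 2).choose (s - 1) : ℕ) : ℝ) := by
    have hsub : (∑ j ∈ Finset.Icc 2 n,
        A * (((n - s - 1).choose (k - s - 1) : ℕ) : ℝ) *
          ((((j : ℝ)) - 1) / (((j : ℝ)) - 1 + ρ)) * (((n - j).choose (s - 1) : ℕ) : ℝ))
        = ∑ j ∈ Finset.Icc 1 n,
        A * (((n - s - 1).choose (k - s - 1) : ℕ) : ℝ) *
          ((((j : ℝ)) - 1) / (((j : ℝ)) - 1 + ρ)) * (((n - j).choose (s - 1) : ℕ) : ℝ) := by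
      refine Finset.sum_subset (Finset.Icc_subset_Icc_left (by omega)) fun x hx hnx => ?_
      rw [Finset.mem_Icc] at hx
      rw [Finset.mem_Icc] at hnx
      have hx1 : x = 1 := by omega
      subst hx1
      norm_num
    rw [← hsub]
    rw [show Finset.Icc 2 n = Finset.Ico 2 (n + 1) from (Finset.Ico_add_one_right_eq_Icc 2 n).symm,
      Finset.sum_Ico_eq_sum_range, show n + 1 - 2 = n - 1 from by omega, Finset.mul_sum]
    refine Finset.sum_congr rfl fun i hi => ?_
    rw [Finset.mem_range] at hi
    rw [show n - (2 + i) = n - i - 2 from by omega]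
    push_cast
    ring
  rw [step3]
  have hext : (∑ j ∈ Finset.range (n - s),
      ((j : ℝ) + 1) / ((j : ℝ) + 1 + ρ) * ((n - j - 2).choose (s - 1) : ℝ))
      = ∑ i ∈ Finset.range (n - 1),
        (((i : ℝ)) + 1) / (((i : ℝ)) + 1 + ρ) * (((n - i - 2).choose (s - 1) : ℕ) : ℝ) := by
    refine Finset.sum_subset (Finset.range_subset_range.mpr (by omega)) fun x hx hnx => ?_
    rw [Finset.mem_range] at hx
    rw [Finset.mem_range] at hnx
    have hz : (n - x - 2).choose (s - 1) = 0 :=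
      Nat.choose_eq_zero_of_lt (by omega)
    rw [hz]
    norm_num
  rw [hext, hconst]
end

section
/- For all integers 1 ≤ k ≤ n and every real ρ > 0, the following identity holds: Σ_{j=1}^{n−k+1} C(n−j, k−1)·(1/(j−1+ρ)) = k·C(n,k)·Σ_{j=1}^{n−k+1} C(n,j)^{-1}·(1/(j(j−1+ρ)))·C(n−k, j−1). (This is the combinatorial identity establishing the closed form of the expected joint gene and site frequency spectrum E[G_{k,s}] in the diagonal case s = k.) -/
open Finset

theorem triple_choose (m a b : ℕ) (h : a + b ≤ m) :
    m.choose a * (m - a).choose b = m.choose b * (m - b).choose a := by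
  have h1 := Nat.choose_mul (n := m) (k := a + b) (s := a) (Nat.le_add_right a b)
  have h2 := Nat.choose_mul (n := m) (k := a + b) (s := b) (Nat.le_add_left b a)
  rw [Nat.add_sub_cancel_left] at h1
  rw [Nat.add_sub_cancel] at h2
  have hsym : (a + b).choose a = (a + b).choose b := by
    rw [← Nat.choose_symm (Nat.le_add_right a b), Nat.add_sub_cancel_left]
  rw [← h1, ← h2, hsym]

theorem key_nat (n k j : ℕ) (hk : 1 ≤ k) (hj : 1 ≤ j) (hjk : j + k ≤ n + 1) :
    j * n.choose j * (n - j).choose (k - 1) = k * n.choose k * (n - k).choose (j - 1) := by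
  obtain ⟨a, rfl⟩ : ∃ a, j = a + 1 := ⟨j - 1, (Nat.succ_pred_eq_of_pos hj).symm⟩
  obtain ⟨b, rfl⟩ : ∃ b, k = b + 1 := ⟨k - 1, (Nat.succ_pred_eq_of_pos hk).symm⟩
  have hn : 1 ≤ n := by omega
  have h1 : (a + 1) * n.choose (a + 1) = n * (n - 1).choose a := by
    have := Nat.add_one_mul_choose_eq (n - 1) a
    simp only [Nat.succ_eq_add_one, Nat.sub_add_cancel hn] at this
    linarith
  have h2 : (b + 1) * n.choose (b + 1) = n * (n - 1).choose b := by
    have := Nat.add_one_mul_choose_eq (n - 1) b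
    simp only [Nat.succ_eq_add_one, Nat.sub_add_cancel hn] at this
    linarith
  have hab : a + b ≤ n - 1 := by omega
  have h3 := triple_choose (n - 1) a b hab
  have e1 : n - (a + 1) = n - 1 - a := by omega
  have e2 : n - (b + 1) = n - 1 - b := by omega
  simp only [Nat.add_sub_cancel, e1, e2]
  rw [h1, h2, mul_assoc, mul_assoc, h3]

/-- the combinatorial identity for the diagonal case `s = k` of the joint gene
and site frequency spectrum. -/
theorem stmt8 (n k : ℕ) (hk : 1 ≤ k) (hkn : k ≤ n) (ρ : ℝ) (hρ : 0 < ρ) :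
    (∑ j ∈ Finset.Icc 1 (n - k + 1),
      ((n - j).choose (k - 1) : ℝ) * (1 / ((j : ℝ) - 1 + ρ))) =
      (k : ℝ) * (n.choose k : ℝ) *
        (∑ j ∈ Finset.Icc 1 (n - k + 1),
          ((n.choose j : ℝ))⁻¹ * (1 / ((j : ℝ) * ((j : ℝ) - 1 + ρ))) *
            ((n - k).choose (j - 1) : ℝ)) := by
  rw [Finset.mul_sum]
  apply Finset.sum_congr rfl
  intro j hj
  rw [Finset.mem_Icc] at hj
  obtain ⟨hj1, hj2⟩ := hj
  have hjn : j ≤ n := by omega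
  have hne : ((n.choose j : ℝ)) ≠ 0 := by
    exact_mod_cast Nat.choose_pos hjn |>.ne'
  have hjne : (j : ℝ) ≠ 0 := by positivity
  have hden : (j : ℝ) - 1 + ρ ≠ 0 := by
    have : (1 : ℝ) ≤ (j : ℝ) := by exact_mod_cast hj1
    nlinarith
  have key := key_nat n k j hk hj1 (by omega)
  have keyR : (j : ℝ) * (n.choose j : ℝ) * ((n - j).choose (k - 1) : ℝ)
      = (k : ℝ) * (n.choose k : ℝ) * ((n - k).choose (j - 1) : ℝ) := by
    exact_mod_cast key
  field_simp
  linear_combination keyR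
end

section
/- For all integers n ≥ 2, 1 ≤ s ≤ n−1 and every real ρ ≥ 0, the following identity holds: s·n·C(n−1, s)·Σ_{j=2}^{n−s+1} C(n, j)^{-1}·(1/(j(j−1+ρ)))·C(n−s−1, j−2) = Σ_{j=0}^{n−s−1} ((j+1)/(j+1+ρ))·C(n−j−2, s−1). -/
open Finset

lemma key_stmt9 (t m k : ℕ) (hk : k ≤ m) :
    ((k:ℝ)+1) * ((t+m-k).choose t : ℝ) * ((t+m+2).choose (k+2) : ℝ) * ((k:ℝ)+2)
      = ((t:ℝ)+1) * ((t:ℝ)+(m:ℝ)+2) * ((t+m+1).choose (t+1) : ℝ) * (m.choose k : ℝ) := by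
  have h1 : t ≤ t+m-k := by omega
  have h2 : k+2 ≤ t+m+2 := by omega
  have h3 : t+1 ≤ t+m+1 := by omega
  rw [Nat.cast_choose ℝ h1, Nat.cast_choose ℝ h2, Nat.cast_choose ℝ h3, Nat.cast_choose ℝ hk]
  have e1 : t+m-k-t = m-k := by omega
  have e2 : t+m+2-(k+2) = t+m-k := by omega
  have e3 : t+m+1-(t+1) = m := by omega
  rw [e1, e2, e3]
  have f1 : ((t+m+2).factorial : ℝ) = ((t:ℝ)+m+2) * ((t+m+1).factorial : ℝ) := by
    have : t+m+2 = (t+m+1)+1 := by omega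
    rw [this, Nat.factorial_succ]; push_cast; ring
  have f2 : ((k+2).factorial : ℝ) = ((k:ℝ)+2) * ((k:ℝ)+1) * (k.factorial : ℝ) := by
    show (((k+1)+1).factorial : ℝ) = _
    rw [Nat.factorial_succ, Nat.factorial_succ]; push_cast; ring
  have f3 : ((t+1).factorial : ℝ) = ((t:ℝ)+1) * (t.factorial : ℝ) := by
    rw [Nat.factorial_succ]; push_cast; ring
  rw [f1, f2, f3]
  have p : ∀ a : ℕ, (a.factorial : ℝ) ≠ 0 := fun a => by positivity
  field_simp

/-- the final reindexing identity in the proof of the joint gene and site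
frequency spectrum theorem. -/
theorem stmt9 (n s : ℕ) (hn : 2 ≤ n) (hs : 1 ≤ s) (hsn : s ≤ n - 1) (ρ : ℝ) (hρ : 0 ≤ ρ) :
    (s : ℝ) * (n : ℝ) * ((n - 1).choose s : ℝ) *
        (∑ j ∈ Finset.Icc 2 (n - s + 1),
          ((n.choose j : ℝ))⁻¹ * (1 / ((j : ℝ) * ((j : ℝ) - 1 + ρ))) *
            ((n - s - 1).choose (j - 2) : ℝ)) =
      ∑ j ∈ Finset.range (n - s),
        ((j : ℝ) + 1) / ((j : ℝ) + 1 + ρ) * ((n - j - 2).choose (s - 1) : ℝ) := by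
  obtain ⟨t, ht⟩ : ∃ t, s = t + 1 := ⟨s - 1, by omega⟩
  obtain ⟨m, hm⟩ : ∃ m, n = t + m + 2 := ⟨n - s - 1, by omega⟩
  subst ht hm
  rw [show t + m + 2 - (t + 1) = m + 1 from by omega,
      show t + m + 2 - 1 = t + m + 1 from by omega,
      show m + 1 + 1 = m + 2 from rfl, show m + 1 - 1 = m from rfl,
      ← Finset.Ico_add_one_right_eq_Icc, Finset.sum_Ico_eq_sum_range, Finset.mul_sum,
      show m + 2 + 1 - 2 = m + 1 from by omega]
  refine Finset.sum_congr rfl fun k hk => ?_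
  have hkm : k ≤ m := by simpa [Nat.lt_succ_iff] using hk
  have e1 : 2 + k - 2 = k := by omega
  have e2 : t + m + 2 - k - 2 = t + m - k := by omega
  have e3 : t + 1 - 1 = t := by omega
  rw [e1, e2, e3]
  have hc : ((t+m+2).choose (2+k) : ℝ) ≠ 0 := by
    have : 0 < (t+m+2).choose (2+k) := Nat.choose_pos (by omega)
    positivity
  have hk2 : ((2+k : ℕ) : ℝ) ≠ 0 := by positivity
  have hkρ : ((2+k : ℕ) : ℝ) - 1 + ρ ≠ 0 := by push_cast; nlinarith [hρ]
  have hkρ' : (k : ℝ) + 1 + ρ ≠ 0 := by nlinarith [hρ]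
  have hkey := key_stmt9 t m k hkm
  have e4 : (2 + k) = (k + 2) := by omega
  rw [e4] at hc hk2 hkρ ⊢
  push_cast at hc hk2 hkρ ⊢
  have hd : (k:ℝ) + 2 - 1 + ρ = (k:ℝ) + 1 + ρ := by ring
  rw [hd]
  have hk2' : (k:ℝ) + 2 ≠ 0 := by positivity
  field_simp
  linear_combination (-1 : ℝ) * hkey
end

section
/- For all integers 2 ≤ m ≤ k ≤ n, the following identity holds: Σ_{j=m}^{n} C(n−j, k−m)·C(j, m)·(1/(j(j−1))) = C(n, k)·k/(n·m·(m−1)). Equivalently, with E[T_j] = 2/(j(j−1)) the expected inter-coalescence times of Kingman's n-coalescent, the expected time during which a nested subtree on k leaves has m lineages equals E[T_m^#] = (k/n)·(2/(m(m−1))). -/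
open Finset

lemma dualVandermonde (r : ℕ) : ∀ N s : ℕ,
    ∑ t ∈ Finset.range (N + 1), t.choose r * (N - t).choose s = (N + 1).choose (r + s + 1) := by
  intro N
  induction N with
  | zero =>
    intro s
    rw [Finset.range_one, Finset.sum_singleton]
    rcases r with _ | r
    · rcases s with _ | s
      · simp
      · rw [Nat.choose_eq_zero_of_lt (show 1 < 0 + (s + 1) + 1 by omega)]
        simp
    · rw [Nat.choose_eq_zero_of_lt (show 0 < r + 1 by omega),
        Nat.choose_eq_zero_of_lt (show 1 < r + 1 + s + 1 by omega)]
      ring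
  | succ N ih =>
    intro s
    cases s with
    | zero =>
      simp only [Nat.choose_zero_right, mul_one, Nat.add_zero]
      rw [← Nat.sum_Icc_choose (N + 1) r]
      refine (Finset.sum_subset ?_ ?_).symm
      · intro x hx
        simp only [Finset.mem_Icc] at hx
        simp only [Finset.mem_range]
        omega
      · intro x hx hx'
        simp only [Finset.mem_range] at hx
        simp only [Finset.mem_Icc] at hx'
        exact Nat.choose_eq_zero_of_lt (by omega)
    | succ s =>
      rw [Finset.sum_range_succ]
      have hlast : (N + 1).choose r * (N + 1 - (N + 1)).choose (s + 1) = 0 := by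
        simp
      rw [hlast, add_zero]
      have hstep : ∀ t ∈ Finset.range (N + 1),
          t.choose r * (N + 1 - t).choose (s + 1)
            = t.choose r * (N - t).choose s + t.choose r * (N - t).choose (s + 1) := by
        intro t ht
        simp only [Finset.mem_range] at ht
        have : N + 1 - t = (N - t) + 1 := by omega
        rw [this, Nat.choose_succ_succ, Nat.mul_add]
      rw [Finset.sum_congr rfl hstep, Finset.sum_add_distrib, ih s, ih (s + 1)]
      have h1 : r + (s + 1) + 1 = (r + s + 1) + 1 := by omega
      have h2 : (N + 1 + 1).choose ((r + s + 1) + 1)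
          = (N + 1).choose (r + s + 1) + (N + 1).choose ((r + s + 1) + 1) :=
        Nat.choose_succ_succ (N + 1) (r + s + 1)
      rw [h1, h2]

lemma absorb (j m : ℕ) (hm : 2 ≤ m) :
    m * (m - 1) * j.choose m = j * (j - 1) * (j - 2).choose (m - 2) := by
  rcases Nat.lt_or_ge j 2 with h | h
  · interval_cases j <;> simp [Nat.choose_eq_zero_of_lt (by omega : 0 < m),
      Nat.choose_eq_zero_of_lt (by omega : 1 < m)]
  · obtain ⟨j', rfl⟩ : ∃ j', j = j' + 2 := ⟨j - 2, by omega⟩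
    obtain ⟨m', rfl⟩ : ∃ m', m = m' + 2 := ⟨m - 2, by omega⟩
    simp only [Nat.add_sub_cancel]
    have h1 : (j' + 2) * (j' + 1).choose (m' + 1) = (j' + 2).choose (m' + 2) * (m' + 2) :=
      Nat.add_one_mul_choose_eq (j' + 1) (m' + 1)
    have h2 : (j' + 1) * j'.choose m' = (j' + 1).choose (m' + 1) * (m' + 1) :=
      Nat.add_one_mul_choose_eq j' m'
    have e1 : m' + 2 - 1 = m' + 1 := rfl
    have e2 : j' + 2 - 1 = j' + 1 := rfl
    rw [e1, e2]
    calc (m' + 2) * (m' + 1) * (j' + 2).choose (m' + 2)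
        = (m' + 1) * ((j' + 2).choose (m' + 2) * (m' + 2)) := by ring
      _ = (m' + 1) * ((j' + 2) * (j' + 1).choose (m' + 1)) := by rw [h1]
      _ = (j' + 2) * ((j' + 1).choose (m' + 1) * (m' + 1)) := by ring
      _ = (j' + 2) * ((j' + 1) * j'.choose m') := by rw [h2]
      _ = (j' + 2) * (j' + 1) * j'.choose m' := by ring

/-- `Σ_{j=m}^{n} C(n−j,k−m)·C(j,m)/(j(j−1)) = C(n,k)·k/(n·m·(m−1))`;
equivalently the expected occupation time of a nested `k`-leaf subtree with `m` lineages is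
`E[T_m^#] = (k/n)·(2/(m(m−1)))`. -/
theorem stmt11 (n k m : ℕ) (hm : 2 ≤ m) (hmk : m ≤ k) (hkn : k ≤ n) :
    (∑ j ∈ Finset.Icc m n,
      ((n - j).choose (k - m) : ℝ) * (j.choose m : ℝ) * (1 / ((j : ℝ) * ((j : ℝ) - 1)))) =
      (n.choose k : ℝ) * (k : ℝ) / ((n : ℝ) * (m : ℝ) * ((m : ℝ) - 1)) ∧
    (∑ j ∈ Finset.Icc m n,
      ((n - j).choose (k - m) : ℝ) * (j.choose m : ℝ) * ((n.choose k : ℝ))⁻¹ *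
        (2 / ((j : ℝ) * ((j : ℝ) - 1)))) =
      (k : ℝ) / (n : ℝ) * (2 / ((m : ℝ) * ((m : ℝ) - 1))) := by
  have hn2 : 2 ≤ n := le_trans hm (le_trans hmk hkn)
  have hmR : (0 : ℝ) < (m : ℝ) := by positivity
  have hm1R : (0 : ℝ) < (m : ℝ) - 1 := by
    have : (1 : ℝ) < (m : ℝ) := by exact_mod_cast hm.trans_lt' (by norm_num)
    linarith
  have hnR : (0 : ℝ) < (n : ℝ) := by
    have : 0 < n := by omega
    positivity
  -- pointwise rewrite of summand
  have hpt : ∀ j ∈ Finset.Icc m n,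
      ((n - j).choose (k - m) : ℝ) * (j.choose m : ℝ) * (1 / ((j : ℝ) * ((j : ℝ) - 1)))
        = ((n - j).choose (k - m) : ℝ) * ((j - 2).choose (m - 2) : ℝ)
            * (1 / ((m : ℝ) * ((m : ℝ) - 1))) := by
    intro j hj
    simp only [Finset.mem_Icc] at hj
    have hj2 : 2 ≤ j := le_trans hm hj.1
    have hjR : (0 : ℝ) < (j : ℝ) := by
      have : 0 < j := by omega
      positivity
    have hj1R : (0 : ℝ) < (j : ℝ) - 1 := by
      have : (1 : ℝ) < (j : ℝ) := by exact_mod_cast hj2.trans_lt' (by norm_num)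
      linarith
    have habs := absorb j m hm
    have habsR : (m : ℝ) * ((m : ℝ) - 1) * (j.choose m : ℝ)
        = (j : ℝ) * ((j : ℝ) - 1) * ((j - 2).choose (m - 2) : ℝ) := by
      have h1 : ((m - 1 : ℕ) : ℝ) = (m : ℝ) - 1 := by
        have : 1 ≤ m := by omega
        push_cast [this]; ring
      have h2 : ((j - 1 : ℕ) : ℝ) = (j : ℝ) - 1 := by
        have : 1 ≤ j := by omega
        push_cast [this]; ring
      calc (m : ℝ) * ((m : ℝ) - 1) * (j.choose m : ℝ)
          = ((m * (m - 1) * j.choose m : ℕ) : ℝ) := by push_cast [h1]; ring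
        _ = ((j * (j - 1) * (j - 2).choose (m - 2) : ℕ) : ℝ) := by rw [habs]
        _ = (j : ℝ) * ((j : ℝ) - 1) * ((j - 2).choose (m - 2) : ℝ) := by push_cast [h2]; ring
    field_simp
    nlinarith [habsR]
  -- the key nat sum
  have hnat : ∑ j ∈ Finset.Icc m n, (n - j).choose (k - m) * (j - 2).choose (m - 2)
      = (n - 1).choose (k - 1) := by
    have hext : ∑ j ∈ Finset.Icc m n, (n - j).choose (k - m) * (j - 2).choose (m - 2)
        = ∑ j ∈ Finset.Icc 2 n, (n - j).choose (k - m) * (j - 2).choose (m - 2) := by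
      apply Finset.sum_subset
      · intro x hx
        simp only [Finset.mem_Icc] at hx ⊢
        omega
      · intro x hx hx'
        simp only [Finset.mem_Icc] at hx hx'
        rw [Nat.choose_eq_zero_of_lt (show x - 2 < m - 2 by omega), mul_zero]
    rw [hext]
    have hre : ∑ j ∈ Finset.Icc 2 n, (n - j).choose (k - m) * (j - 2).choose (m - 2)
        = ∑ t ∈ Finset.range (n - 2 + 1), (t.choose (m - 2)) * ((n - 2 - t).choose (k - m)) := by
      rw [Finset.sum_bij' (fun j _ => j - 2) (fun t _ => t + 2)]
      · intro j hj
        simp only [Finset.mem_Icc] at hj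
        simp only [Finset.mem_range]
        omega
      · intro t ht
        simp only [Finset.mem_range] at ht
        simp only [Finset.mem_Icc]
        omega
      · intro j hj; simp only [Finset.mem_Icc] at hj; omega
      · intro t ht; simp only [Finset.mem_range] at ht; omega
      · intro j hj
        simp only [Finset.mem_Icc] at hj
        have : n - 2 - (j - 2) = n - j := by omega
        rw [this, mul_comm]
    rw [hre, dualVandermonde (m - 2) (n - 2) (k - m)]
    congr 1 <;> omega
  -- relation C(n-1,k-1) and C(n,k)
  have hck : n * (n - 1).choose (k - 1) = k * n.choose k := by
    obtain ⟨n', rfl⟩ : ∃ n', n = n' + 1 := ⟨n - 1, by omega⟩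
    obtain ⟨k', rfl⟩ : ∃ k', k = k' + 1 := ⟨k - 1, by omega⟩
    have h := Nat.add_one_mul_choose_eq n' k'
    simp only [Nat.add_sub_cancel]
    have h' : (n' + 1) * n'.choose k' = (n' + 1).choose (k' + 1) * (k' + 1) :=
      Nat.add_one_mul_choose_eq n' k'
    rw [h']
    ring
  have hckR : (n : ℝ) * ((n - 1).choose (k - 1) : ℝ) = (k : ℝ) * (n.choose k : ℝ) := by
    exact_mod_cast congrArg (Nat.cast : ℕ → ℝ) hck
  have hsumR : ∑ j ∈ Finset.Icc m n,
      ((n - j).choose (k - m) : ℝ) * (((j - 2).choose (m - 2) : ℕ) : ℝ)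
      = (((n - 1).choose (k - 1) : ℕ) : ℝ) := by
    rw [← hnat]; push_cast; ring_nf
  have key : (∑ j ∈ Finset.Icc m n,
      ((n - j).choose (k - m) : ℝ) * (j.choose m : ℝ) * (1 / ((j : ℝ) * ((j : ℝ) - 1)))) =
      (n.choose k : ℝ) * (k : ℝ) / ((n : ℝ) * (m : ℝ) * ((m : ℝ) - 1)) := by
    rw [Finset.sum_congr rfl hpt, ← Finset.sum_mul, hsumR]
    field_simp
    linear_combination hckR
  refine ⟨key, ?_⟩
  have hnk : (0 : ℝ) < (n.choose k : ℝ) := by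
    have : 0 < n.choose k := Nat.choose_pos hkn
    positivity
  have hre2 : ∀ j ∈ Finset.Icc m n,
      ((n - j).choose (k - m) : ℝ) * (j.choose m : ℝ) * ((n.choose k : ℝ))⁻¹ *
        (2 / ((j : ℝ) * ((j : ℝ) - 1)))
      = (2 * ((n.choose k : ℝ))⁻¹) *
        (((n - j).choose (k - m) : ℝ) * (j.choose m : ℝ) * (1 / ((j : ℝ) * ((j : ℝ) - 1)))) := by
    intro j _; ring
  rw [Finset.sum_congr rfl hre2, ← Finset.mul_sum, key]
  field_simp
end

section
/- For all integers k ≥ 2 and 1 ≤ s ≤ k−1, defining p_{k,m}(s) := C(k−m, s−1)·(s−1)!·(Π_{b=m−1}^{k−s−1} b)·(Π_{b=m}^{k−1} b)^{-1} for 2 ≤ m ≤ k−s+1, the following identity holds: Σ_{m=2}^{k−s+1} p_{k,m}(s)/(m−1) = 1/s. Equivalently, Σ_{m=2}^{k−s+1} m·p_{k,m}(s)·(1/(m(m−1))) = 1/s. -/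
open Finset

/-- `p k m s` is the probability that a particular one of `m` lineages of a `k`-coalescent
subtends exactly `s` of the `k` leaves:
`p_{k,m}(s) = C(k−m, s−1)·(s−1)!·(Π_{b=m−1}^{k−s−1} b)·(Π_{b=m}^{k−1} b)⁻¹`. -/
noncomputable def p (k m s : ℕ) : ℝ :=
  ((k - m).choose (s - 1) : ℝ) * (Nat.factorial (s - 1) : ℝ) *
    (∏ b ∈ Finset.Icc (m - 1) (k - s - 1), (b : ℝ)) * (∏ b ∈ Finset.Icc m (k - 1), (b : ℝ))⁻¹

lemma fact_mul_prod_Icc (a b : ℕ) (h : a ≤ b) :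
    Nat.factorial a * ∏ i ∈ Finset.Icc (a+1) b, i = Nat.factorial b := by
  induction b with
  | zero => interval_cases a; simp
  | succ b ih =>
    rcases Nat.lt_or_ge a (b+1) with h' | h'
    · have hab : a ≤ b := Nat.lt_succ_iff.mp h'
      rw [Finset.prod_Icc_succ_top (by omega), ← mul_assoc, ih hab, Nat.factorial_succ]
      ring
    · have : a = b + 1 := le_antisymm h h'
      subst this
      rw [Finset.Icc_eq_empty (by omega), Finset.prod_empty, mul_one]

/-- `Σ_{m=2}^{k−s+1} p_{k,m}(s)/(m−1) = 1/s`; equivalently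
`Σ_{m=2}^{k−s+1} m·p_{k,m}(s)·(1/(m(m−1))) = 1/s`. -/
theorem stmt12 (k s : ℕ) (hk : 2 ≤ k) (hs : 1 ≤ s) (hsk : s ≤ k - 1) :
    (∑ m ∈ Finset.Icc 2 (k - s + 1), p k m s / ((m : ℝ) - 1)) = 1 / (s : ℝ) ∧
    (∑ m ∈ Finset.Icc 2 (k - s + 1), (m : ℝ) * p k m s * (1 / ((m : ℝ) * ((m : ℝ) - 1)))) =
      1 / (s : ℝ) := by
  have hterm : ∀ m ∈ Finset.Icc 2 (k - s + 1), p k m s / ((m : ℝ) - 1)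
      = ((k - m).choose (s - 1) : ℝ) *
        ((Nat.factorial (s-1) : ℝ) * (Nat.factorial (k-s-1) : ℝ) / (Nat.factorial (k-1) : ℝ)) := by
    intro m hm
    simp only [Finset.mem_Icc] at hm
    obtain ⟨hm2, hmk⟩ := hm
    have hA : (Nat.factorial (m-2) : ℝ) * ∏ b ∈ Finset.Icc (m-1) (k-s-1), (b : ℝ)
        = (Nat.factorial (k-s-1) : ℝ) := by
      have h := fact_mul_prod_Icc (m-2) (k-s-1) (by omega)
      have e : m - 2 + 1 = m - 1 := by omega
      rw [e] at h
      have h2 := congrArg (Nat.cast : ℕ → ℝ) h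
      push_cast at h2
      exact h2
    have hB : (Nat.factorial (m-1) : ℝ) * ∏ b ∈ Finset.Icc m (k-1), (b : ℝ)
        = (Nat.factorial (k-1) : ℝ) := by
      have h := fact_mul_prod_Icc (m-1) (k-1) (by omega)
      have e : m - 1 + 1 = m := by omega
      rw [e] at h
      have h2 := congrArg (Nat.cast : ℕ → ℝ) h
      push_cast at h2
      exact h2
    have hfacm : (Nat.factorial (m-1) : ℝ) = ((m:ℝ) - 1) * (Nat.factorial (m-2) : ℝ) := by
      have e : m - 1 = (m - 2) + 1 := by omega
      rw [e, Nat.factorial_succ]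
      push_cast
      have : ((m - 2 : ℕ) : ℝ) = (m : ℝ) - 2 := by
        have : (2 : ℕ) ≤ m := hm2
        push_cast [Nat.cast_sub this]
        ring
      rw [this]; ring
    have hm1 : ((m : ℝ) - 1) ≠ 0 := by
      have : (2 : ℝ) ≤ (m : ℝ) := by exact_mod_cast hm2
      nlinarith
    have hf2 : (Nat.factorial (m-2) : ℝ) ≠ 0 := by positivity
    have hf1 : (Nat.factorial (m-1) : ℝ) ≠ 0 := by positivity
    have hfk : (Nat.factorial (k-1) : ℝ) ≠ 0 := by positivity
    -- express products
    have hAe : (∏ b ∈ Finset.Icc (m-1) (k-s-1), (b : ℝ))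
        = (Nat.factorial (k-s-1) : ℝ) / (Nat.factorial (m-2) : ℝ) := by
      field_simp
      linarith [hA]
    have hBe : (∏ b ∈ Finset.Icc m (k-1), (b : ℝ))
        = (Nat.factorial (k-1) : ℝ) / (Nat.factorial (m-1) : ℝ) := by
      field_simp
      linarith [hB]
    rw [p, hAe, hBe, hfacm]
    field_simp
  have hsum1 : (∑ m ∈ Finset.Icc 2 (k - s + 1), p k m s / ((m : ℝ) - 1)) = 1 / (s : ℝ) := by
    rw [Finset.sum_congr rfl hterm, ← Finset.sum_mul]
    have hre : ∑ m ∈ Finset.Icc 2 (k - s + 1), ((k - m).choose (s - 1) : ℝ)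
        = (((k-1).choose s : ℕ) : ℝ) := by
      have hn : ∑ m ∈ Finset.Icc 2 (k - s + 1), (k - m).choose (s - 1)
          = ∑ j ∈ Finset.Icc (s-1) (k-2), j.choose (s-1) := by
        apply Finset.sum_nbij' (fun m => k - m) (fun j => k - j)
        · intro a ha; simp only [Finset.mem_Icc] at *; omega
        · intro a ha; simp only [Finset.mem_Icc] at *; omega
        · intro a ha; simp only [Finset.mem_Icc] at ha; omega
        · intro a ha; simp only [Finset.mem_Icc] at ha; omega
        · intro a ha; rfl
      have := Nat.sum_Icc_choose (k-2) (s-1)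
      have e1 : s - 1 + 1 = s := by omega
      have e2 : k - 2 + 1 = k - 1 := by omega
      rw [e1, e2] at this
      rw [← Nat.cast_sum, hn, this]
    rw [hre]
    have hch := Nat.choose_mul_factorial_mul_factorial hsk
    have e3 : k - 1 - s = k - s - 1 := by omega
    rw [e3] at hch
    have hchR : (((k-1).choose s : ℕ) : ℝ) * (Nat.factorial s : ℝ) * (Nat.factorial (k-s-1) : ℝ)
        = (Nat.factorial (k-1) : ℝ) := by exact_mod_cast hch
    have hfs : (Nat.factorial s : ℝ) = (s : ℝ) * (Nat.factorial (s-1) : ℝ) := by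
      have e : s = (s - 1) + 1 := by omega
      rw [e, Nat.factorial_succ]
      push_cast
      ring
    have hs0 : (s : ℝ) ≠ 0 := by
      have : 0 < s := hs
      exact_mod_cast this.ne'
    have hfk : (Nat.factorial (k-1) : ℝ) ≠ 0 := by positivity
    rw [hfs] at hchR
    field_simp
    nlinarith [hchR]
  refine ⟨hsum1, ?_⟩
  rw [← hsum1]
  apply Finset.sum_congr rfl
  intro m hm
  simp only [Finset.mem_Icc] at hm
  have hm0 : (m : ℝ) ≠ 0 := by
    have : (0:ℕ) < m := by omega
    exact_mod_cast this.ne'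
  have hm1 : ((m : ℝ) - 1) ≠ 0 := by
    have : (2 : ℝ) ≤ (m : ℝ) := by exact_mod_cast hm.1
    nlinarith
  field_simp
end

section
/- For all integers 1 ≤ k ≤ n and every real ρ > 0, the following identity holds: Σ_{i=1}^{n} C(n−i, k−1)·(k−1)!·(Π_{a=i−1}^{n−k−1} (a+ρ))·(1/(i−1+ρ))·(Π_{a=i}^{n−1} (a+ρ))^{-1} = (Π_{a=n−k+1}^{n} a)/(k·Π_{a=n−k}^{n−1} (a+ρ)). Multiplying both sides by θ₁ this is the statement E[G_k] = (θ₁/k)·((n−k+1)⋯n)/((n−k+ρ)⋯(n−1+ρ)) of the gene frequency spectrum theorem. -/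
open Finset

private lemma icc_eq_ioc_int (a b : ℤ) : Finset.Icc a b = Finset.Ioc (a - 1) b := by
  ext x; simp only [Finset.mem_Icc, Finset.mem_Ioc]; omega

private lemma prod_Ioc_consec_int (f : ℤ → ℝ) {a b c : ℤ} (h1 : a ≤ b) (h2 : b ≤ c) :
    (∏ x ∈ Finset.Ioc a b, f x) * ∏ x ∈ Finset.Ioc b c, f x = ∏ x ∈ Finset.Ioc a c, f x := by
  rw [← Finset.prod_union (by
    rw [Finset.disjoint_left]
    intro x hx hx'
    simp only [Finset.mem_Ioc] at hx hx'
    omega), Finset.Ioc_union_Ioc_eq_Ioc h1 h2]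

private lemma sum_choose_aux (m : ℕ) (n : ℕ) :
    ∑ j ∈ Finset.range n, j.choose m = n.choose (m + 1) := by
  induction n with
  | zero => simp
  | succ n ih =>
      rw [Finset.sum_range_succ, ih, Nat.choose_succ_succ]
      simp only [Nat.succ_eq_add_one]
      omega

private lemma prod_icc_cast (f : ℤ → ℝ) (m n : ℕ) :
    ∏ a ∈ Finset.Icc (m : ℤ) (n : ℤ), f a = ∏ a ∈ Finset.Icc m n, f (a : ℤ) := by
  rw [show Finset.Icc (m : ℤ) (n : ℤ) = Finset.image (fun x : ℕ => (x : ℤ)) (Finset.Icc m n) by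
    ext a
    simp only [Finset.mem_Icc, Finset.mem_image]
    constructor
    · intro h; exact ⟨a.toNat, by omega, by omega⟩
    · rintro ⟨x, hx, rfl⟩; omega]
  rw [Finset.prod_image]
  intro x _ y _ h
  exact Nat.cast_injective h

/-- the identity behind the gene frequency spectrum
`E[G_k] = (θ₁/k)·((n−k+1)⋯n)/((n−k+ρ)⋯(n−1+ρ))`. -/
theorem stmt14 (n k : ℕ) (hk : 1 ≤ k) (hkn : k ≤ n) (ρ : ℝ) (hρ : 0 < ρ) :
    (∑ i ∈ Finset.Icc 1 n,
      ((n - i).choose (k - 1) : ℝ) * (Nat.factorial (k - 1) : ℝ) *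
        (∏ a ∈ Finset.Icc ((i : ℤ) - 1) ((n : ℤ) - (k : ℤ) - 1), ((a : ℝ) + ρ)) *
        (1 / ((i : ℝ) - 1 + ρ)) *
        (∏ a ∈ Finset.Icc (i : ℤ) ((n : ℤ) - 1), ((a : ℝ) + ρ))⁻¹) =
      (∏ a ∈ Finset.Icc ((n : ℤ) - (k : ℤ) + 1) (n : ℤ), (a : ℝ)) /
        ((k : ℝ) * ∏ a ∈ Finset.Icc ((n : ℤ) - (k : ℤ)) ((n : ℤ) - 1), ((a : ℝ) + ρ)) := by
  have hfac : ∀ a : ℤ, 0 ≤ a → (0:ℝ) < (a : ℝ) + ρ := by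
    intro a ha
    have : (0:ℝ) ≤ (a : ℝ) := by exact_mod_cast ha
    linarith
  have hD : 0 < ∏ a ∈ Finset.Icc ((n : ℤ) - (k : ℤ)) ((n : ℤ) - 1), ((a : ℝ) + ρ) := by
    apply Finset.prod_pos
    intro a ha
    rw [Finset.mem_Icc] at ha
    exact hfac a (by omega)
  -- termwise identity
  have key : ∀ i ∈ Finset.Icc 1 n,
      ((n - i).choose (k - 1) : ℝ) * (Nat.factorial (k - 1) : ℝ) *
        (∏ a ∈ Finset.Icc ((i : ℤ) - 1) ((n : ℤ) - (k : ℤ) - 1), ((a : ℝ) + ρ)) *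
        (1 / ((i : ℝ) - 1 + ρ)) *
        (∏ a ∈ Finset.Icc (i : ℤ) ((n : ℤ) - 1), ((a : ℝ) + ρ))⁻¹
      = ((n - i).choose (k - 1) : ℝ) * (Nat.factorial (k - 1) : ℝ) /
          (∏ a ∈ Finset.Icc ((n : ℤ) - (k : ℤ)) ((n : ℤ) - 1), ((a : ℝ) + ρ)) := by
    intro i hi
    rw [Finset.mem_Icc] at hi
    by_cases hcase : i + k ≤ n + 1
    · have hFi : (0:ℝ) < (i : ℝ) - 1 + ρ := by
        have : (1:ℝ) ≤ (i : ℝ) := by exact_mod_cast hi.1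
        linarith
      have hP2 : 0 < ∏ a ∈ Finset.Icc (i : ℤ) ((n : ℤ) - 1), ((a : ℝ) + ρ) := by
        apply Finset.prod_pos
        intro a ha
        rw [Finset.mem_Icc] at ha
        exact hfac a (by omega)
      have hkey : (∏ a ∈ Finset.Icc ((i : ℤ) - 1) ((n : ℤ) - (k : ℤ) - 1), ((a : ℝ) + ρ)) *
          (∏ a ∈ Finset.Icc ((n : ℤ) - (k : ℤ)) ((n : ℤ) - 1), ((a : ℝ) + ρ)) =
          ((i : ℝ) - 1 + ρ) * ∏ a ∈ Finset.Icc (i : ℤ) ((n : ℤ) - 1), ((a : ℝ) + ρ) := by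
        rw [icc_eq_ioc_int ((i : ℤ) - 1), icc_eq_ioc_int ((n : ℤ) - (k : ℤ)),
          icc_eq_ioc_int (i : ℤ)]
        rw [prod_Ioc_consec_int _ (by omega : (i : ℤ) - 1 - 1 ≤ (n : ℤ) - (k : ℤ) - 1)
          (by omega : (n : ℤ) - (k : ℤ) - 1 ≤ (n : ℤ) - 1)]
        rw [← prod_Ioc_consec_int (fun a : ℤ => ((a : ℝ) + ρ))
          (by omega : (i : ℤ) - 1 - 1 ≤ (i : ℤ) - 1) (by omega : (i : ℤ) - 1 ≤ (n : ℤ) - 1)]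
        congr 1
        rw [show Finset.Ioc ((i : ℤ) - 1 - 1) ((i : ℤ) - 1) = {(i : ℤ) - 1} by
          rw [← icc_eq_ioc_int]; exact Finset.Icc_self _]
        rw [Finset.prod_singleton]
        push_cast
        ring
      field_simp
      linear_combination
        (((n - i).choose (k - 1) : ℝ)) * hkey
    · have h0 : (n - i).choose (k - 1) = 0 := Nat.choose_eq_zero_of_lt (by omega)
      rw [h0]
      simp
  rw [Finset.sum_congr rfl key, ← Finset.sum_div, ← Finset.sum_mul]
  -- compute the sum of binomial coefficients
  have hsum : ∑ i ∈ Finset.Icc 1 n, ((n - i).choose (k - 1) : ℝ) = (n.choose k : ℝ) := by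
    rw [← Nat.cast_sum]
    congr 1
    have hb : ∑ i ∈ Finset.Icc 1 n, (n - i).choose (k - 1)
        = ∑ j ∈ Finset.range n, j.choose (k - 1) := by
      refine Finset.sum_nbij' (fun i => n - i) (fun j => n - j) ?_ ?_ ?_ ?_ ?_
      · intro a ha; simp only [Finset.mem_Icc] at ha; simp only [Finset.mem_range]; omega
      · intro a ha; simp only [Finset.mem_range] at ha; simp only [Finset.mem_Icc]; omega
      · intro a ha; simp only [Finset.mem_Icc] at ha; show n - (n - a) = a; omega
      · intro a ha; simp only [Finset.mem_range] at ha; show n - (n - a) = a; omega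
      · intro a _; rfl
    rw [hb, sum_choose_aux, Nat.sub_add_cancel hk]
  rw [hsum]
  -- compute the numerator product
  have hN : (∏ a ∈ Finset.Icc ((n : ℤ) - (k : ℤ) + 1) (n : ℤ), (a : ℝ))
      = (n.choose k : ℝ) * (k.factorial : ℝ) := by
    have h1 : (n : ℤ) - (k : ℤ) + 1 = ((n - k + 1 : ℕ) : ℤ) := by push_cast [hkn]; ring
    rw [h1, prod_icc_cast (fun a => (a : ℝ))]
    have h3 : (∏ a ∈ Finset.Icc (n - k + 1) n, a) * (n - k).factorial = n.factorial := by
      rw [← Finset.prod_Ico_id_eq_factorial (n - k), ← Finset.prod_Ico_id_eq_factorial n,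
        ← Finset.Ico_add_one_right_eq_Icc (n - k + 1) n]
      rw [mul_comm, Finset.prod_Ico_consecutive _ (by omega : 1 ≤ n - k + 1)
        (by omega : n - k + 1 ≤ n + 1)]
    have h2 : ∏ a ∈ Finset.Icc (n - k + 1) n, a = n.choose k * k.factorial := by
      have h4 := Nat.choose_mul_factorial_mul_factorial hkn
      have h5 : (0:ℕ) < (n - k).factorial := Nat.factorial_pos _
      apply Nat.eq_of_mul_eq_mul_right h5
      rw [h3, ← h4]
    rw [show (∏ a ∈ Finset.Icc (n - k + 1) n, (((a : ℤ) : ℝ)))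
        = ((∏ a ∈ Finset.Icc (n - k + 1) n, a : ℕ) : ℝ) by push_cast; rfl]
    rw [h2]
    push_cast
    ring
  rw [hN]
  have hkfac : (k.factorial : ℝ) = (k : ℝ) * (Nat.factorial (k - 1) : ℝ) := by
    rw [← Nat.cast_mul, Nat.mul_factorial_pred (by omega)]
  have hk0 : (k : ℝ) ≠ 0 := by positivity
  rw [hkfac]
  field_simp
end

section
/- For all integers 1 ≤ s < k ≤ n and every real θ₂ > 0, the function ρ ↦ (θ₂/s)·(k/n)·C(n−1,s)^{-1}·B(n,s,ρ) tends to (k/n)·(θ₂/s) as ρ → 0⁺; moreover, if k < n then this limit (k/n)·(θ₂/s) is strictly smaller than the classical expected site frequency θ₂/s. In particular, for k = n the expected conditional site frequency spectrum converges to the classical spectrum θ₂/s as ρ → 0, while for k < n it does not. -/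
open Finset

lemma hockey_s15 (r m : ℕ) : ∑ i ∈ Finset.range m, (r + i).choose r = (r + m).choose (r + 1) := by
  induction m with
  | zero => simp
  | succ m ih =>
    rw [Finset.sum_range_succ, ih]
    have h : r + (m + 1) = (r + m) + 1 := by omega
    rw [h, Nat.choose_succ_succ (r + m) r]
    simp only [Nat.succ_eq_add_one]
    omega

lemma Bsum (n s : ℕ) (hs : 1 ≤ s) (hsn : s < n) :
    ∑ j ∈ Finset.range (n - s), (n - j - 2).choose (s - 1) = (n - 1).choose s := by
  rw [← Finset.sum_range_reflect]
  have h1 : ∀ j ∈ Finset.range (n - s),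
      (n - (n - s - 1 - j) - 2).choose (s - 1) = ((s - 1) + j).choose (s - 1) := by
    intro j hj
    simp only [Finset.mem_range] at hj
    congr 1
    omega
  rw [Finset.sum_congr rfl h1, hockey_s15]
  congr 1 <;> omega

lemma continuousAt_B (n s : ℕ) : ContinuousAt (B n s) 0 := by
  unfold B
  apply tendsto_finset_sum
  intro j _
  apply ContinuousAt.mul _ continuousAt_const
  apply ContinuousAt.div continuousAt_const
  · exact (continuousAt_const.add continuousAt_id)
  · positivity

/-- as `ρ → 0⁺` the expected conditional site frequency tends to
`(k/n)·(θ₂/s)`, and for `k < n` this limit is strictly smaller than the classical value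
`θ₂/s`. -/
theorem stmt15 (n k s : ℕ) (hs : 1 ≤ s) (hsk : s < k) (hkn : k ≤ n) (θ₂ : ℝ) (hθ : 0 < θ₂) :
    Filter.Tendsto
      (fun ρ : ℝ =>
        θ₂ / (s : ℝ) * ((k : ℝ) / (n : ℝ)) * (((n - 1).choose s : ℝ))⁻¹ * B n s ρ)
      (nhdsWithin 0 (Set.Ioi 0))
      (nhds ((k : ℝ) / (n : ℝ) * (θ₂ / (s : ℝ)))) ∧
    (k < n → (k : ℝ) / (n : ℝ) * (θ₂ / (s : ℝ)) < θ₂ / (s : ℝ)) := by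
  have hsn : s < n := lt_of_lt_of_le hsk hkn
  have hC : ((n - 1).choose s : ℝ) ≠ 0 := by
    have : 0 < (n - 1).choose s := Nat.choose_pos (by omega)
    positivity
  have hB0 : B n s 0 = ((n - 1).choose s : ℝ) := by
    unfold B
    have h1 : ∀ j ∈ Finset.range (n - s),
        ((j : ℝ) + 1) / ((j : ℝ) + 1 + 0) * ((n - j - 2).choose (s - 1) : ℝ)
          = ((n - j - 2).choose (s - 1) : ℝ) := by
      intro j _
      rw [add_zero, div_self (by positivity), one_mul]
    rw [Finset.sum_congr rfl h1, ← Nat.cast_sum, Bsum n s hs hsn]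
  constructor
  · have hcont : ContinuousAt
        (fun ρ : ℝ =>
          θ₂ / (s : ℝ) * ((k : ℝ) / (n : ℝ)) * (((n - 1).choose s : ℝ))⁻¹ * B n s ρ) 0 :=
      continuousAt_const.mul (continuousAt_B n s)
    have := hcont.tendsto.mono_left (nhdsWithin_le_nhds (s := Set.Ioi (0:ℝ)))
    convert this using 2
    rw [hB0, mul_assoc, inv_mul_cancel₀ hC, mul_one, mul_comm]
  · intro hkn'
    have hspos : (0 : ℝ) < θ₂ / s := by
      have hs' : (0:ℝ) < s := by exact_mod_cast hs
      exact div_pos hθ hs'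
    have hn : (0:ℝ) < n := by exact_mod_cast (by omega : 0 < n)
    have hfrac : (k : ℝ) / (n : ℝ) < 1 := by
      rw [div_lt_one hn]
      exact_mod_cast hkn'
    calc (k : ℝ) / n * (θ₂ / s) < 1 * (θ₂ / s) := by
          exact mul_lt_mul_of_pos_right hfrac hspos
      _ = θ₂ / s := one_mul _
end
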